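/- arXiv:1002.3808 — 4 statements merged into one kernel-verified Lean document; each statement's English description precedes it below -/
import Mathlib

section
/- For a fixed squarefree-supported multiplicative setup: for coprime natural numbers q₁ and q₀q₂, the series ∑_{d ≥ 1, gcd(d,q₁)=1} μ(d)·gcd(d, q₀q₂)/d² converges absolutely and equals (6/π²)·∏_{p | q₁}(1 - 1/p²)^{-1}·∏_{p | q₀q₂}(1 + 1/p)^{-1}. -/
open ArithmeticFunction Real

lemma aux_sum_sq (c : ℝ) : Summable (fun d : ℕ => c / (d : ℝ) ^ 2) := by
  simpa [div_eq_mul_inv, mul_comm] using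
    ((Real.summable_one_div_nat_pow.mpr one_lt_two).mul_left c)

lemma aux_gcd_mul {m n q : ℕ} (h : Nat.Coprime m n) :
    Nat.gcd (m * n) q = Nat.gcd m q * Nat.gcd n q := by
  refine Nat.dvd_antisymm ?_ ?_
  · simpa [← gcd_eq_nat_gcd, gcd_comm] using gcd_mul_dvd_mul_gcd q m n
  · refine Nat.dvd_gcd (mul_dvd_mul (Nat.gcd_dvd_left _ _) (Nat.gcd_dvd_left _ _)) ?_
    exact Nat.Coprime.mul_dvd_of_dvd_of_dvd
      (Nat.Coprime.coprime_dvd_left (Nat.gcd_dvd_left _ _)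
        (Nat.Coprime.coprime_dvd_right (Nat.gcd_dvd_left _ _) h))
      (Nat.gcd_dvd_right _ _) (Nat.gcd_dvd_right _ _)

lemma aux_moebius_summable : Summable (fun n : ℕ => (moebius n : ℝ) / (n : ℝ) ^ 2) := by
  refine Summable.of_norm ?_
  refine Summable.of_nonneg_of_le (fun n => norm_nonneg _) (fun n => ?_) (aux_sum_sq 1)
  rcases eq_or_ne n 0 with rfl | hn
  · simp
  · have hn2 : (0:ℝ) < (n:ℝ)^2 := by positivity
    rw [norm_div, norm_pow, Real.norm_natCast, Real.norm_eq_abs]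
    refine div_le_div₀ (by positivity) ?_ hn2 le_rfl
    exact_mod_cast abs_moebius_le_one (n := n)

lemma aux_moebius_hasSum : HasSum (fun n : ℕ => (moebius n : ℝ) / (n : ℝ) ^ 2) (6 / π ^ 2) := by
  have hs : (1 : ℝ) < (2 : ℂ).re := by norm_num
  have hπ : ((π : ℂ) ^ 2) ≠ 0 := by simp [Real.pi_ne_zero]
  have hz : LSeries (fun n => (moebius n : ℂ)) 2 = 6 / (π : ℂ) ^ 2 := by
    have h := ArithmeticFunction.LSeries_zeta_mul_Lseries_moebius (s := 2) hs
    rw [ArithmeticFunction.LSeries_zeta_eq_riemannZeta hs, riemannZeta_two] at h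
    rw [eq_div_iff hπ]
    field_simp at h
    linear_combination h
  have hterm : ∀ n : ℕ, LSeries.term (fun n => (moebius n : ℂ)) 2 n
      = ((((moebius n : ℝ)) / (n : ℝ) ^ 2 : ℝ) : ℂ) := by
    intro n
    rcases eq_or_ne n 0 with rfl | hn
    · simp [LSeries.term]
    · rw [LSeries.term_of_ne_zero hn]
      rw [show ((2:ℂ)) = ((2:ℕ):ℂ) by norm_num, Complex.cpow_natCast]
      push_cast
      ring
  have hsum := aux_moebius_summable
  have key : ((∑' n : ℕ, (moebius n : ℝ) / (n : ℝ) ^ 2 : ℝ) : ℂ) = ((6 / π ^ 2 : ℝ) : ℂ) := by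
    rw [Complex.ofReal_tsum]
    have : ∑' n : ℕ, ((((moebius n : ℝ)) / (n : ℝ) ^ 2 : ℝ) : ℂ)
        = LSeries (fun n => (moebius n : ℂ)) 2 :=
      tsum_congr fun n => (hterm n).symm
    rw [this, hz]
    push_cast
    ring
  have h2 : (∑' n : ℕ, (moebius n : ℝ) / (n : ℝ) ^ 2) = 6 / π ^ 2 :=
    Complex.ofReal_injective key
  exact h2 ▸ hsum.hasSum

lemma aux_moebius_norm_summable : Summable (fun n : ℕ => ‖(moebius n : ℝ) / (n : ℝ) ^ 2‖) := by
  refine Summable.of_nonneg_of_le (fun n => norm_nonneg _) (fun n => ?_) (aux_sum_sq 1)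
  rcases eq_or_ne n 0 with rfl | hn
  · simp
  · have hn2 : (0:ℝ) < (n:ℝ)^2 := by positivity
    rw [norm_div, norm_pow, Real.norm_natCast, Real.norm_eq_abs]
    refine div_le_div₀ (by positivity) ?_ hn2 le_rfl
    exact_mod_cast abs_moebius_le_one (n := n)

lemma aux_tsum_pow {h : ℕ → ℝ} {p : ℕ} (hp : p.Prime)
    (hz : ∀ n, ¬ Squarefree n → h n = 0) : ∑' e : ℕ, h (p ^ e) = h 1 + h p := by
  have hv : ∀ e ∉ ({0, 1} : Finset ℕ), h (p ^ e) = 0 := by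
    intro e he
    refine hz _ (fun hsq => ?_)
    have h2 : 2 ≤ e := by simp only [Finset.mem_insert, Finset.mem_singleton] at he; omega
    have hd : p * p ∣ p ^ e := by
      calc p * p = p ^ 2 := (sq p).symm
      _ ∣ p ^ e := pow_dvd_pow p h2
    exact hp.not_isUnit (hsq p hd)
  rw [tsum_eq_sum hv, Finset.sum_pair (by norm_num : (0:ℕ) ≠ 1)]
  simp

theorem stmt_4 (q0 q1 q2 : ℕ) (h1 : 0 < q1) (h0 : 0 < q0 * q2)
    (hcop : Nat.Coprime q1 (q0 * q2)) :
    Summable (fun d : ℕ =>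
      |(if Nat.Coprime d q1 then (moebius d : ℝ) * (Nat.gcd d (q0 * q2)) / (d : ℝ) ^ 2 else 0)|) ∧
    (∑' d : ℕ,
        if Nat.Coprime d q1 then (moebius d : ℝ) * (Nat.gcd d (q0 * q2)) / (d : ℝ) ^ 2 else 0) =
      (6 / π ^ 2) * (∏ p ∈ q1.primeFactors, (1 - 1 / (p : ℝ) ^ 2)⁻¹) *
        ∏ p ∈ (q0 * q2).primeFactors, (1 + 1 / (p : ℝ))⁻¹ := by
  set q := q0 * q2 with hq
  set f : ℕ → ℝ := fun d =>
    if Nat.Coprime d q1 then (moebius d : ℝ) * (Nat.gcd d q) / (d : ℝ) ^ 2 else 0 with hf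
  set N := q1 * q with hN
  have hNne : N ≠ 0 := Nat.mul_ne_zero h1.ne' h0.ne'
  -- basic values
  have hf1 : f 1 = 1 := by simp [hf, Nat.coprime_one_left]
  have hf0 : f 0 = 0 := by simp [hf]
  have hfz : ∀ n, ¬ Squarefree n → f n = 0 := by
    intro n hn
    simp [hf, moebius_eq_zero_of_not_squarefree hn]
  -- multiplicativity
  have hmul : ∀ {m n : ℕ}, Nat.Coprime m n → f (m * n) = f m * f n := by
    intro m n hmn
    simp only [hf]
    by_cases hm : Nat.Coprime m q1 <;> by_cases hn : Nat.Coprime n q1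
    · rw [if_pos (Nat.coprime_mul_iff_left.mpr ⟨hm, hn⟩), if_pos hm, if_pos hn,
        isMultiplicative_moebius.map_mul_of_coprime hmn, aux_gcd_mul hmn]
      push_cast
      ring
    · rw [if_neg (fun h => hn (Nat.coprime_mul_iff_left.mp h).2), if_neg hn, mul_zero]
    · rw [if_neg (fun h => hm (Nat.coprime_mul_iff_left.mp h).1), if_neg hm, zero_mul]
    · rw [if_neg (fun h => hm (Nat.coprime_mul_iff_left.mp h).1), if_neg hm, zero_mul]
  -- summability
  have hfle : ∀ d : ℕ, ‖f d‖ ≤ (q : ℝ) / (d : ℝ) ^ 2 := by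
    intro d
    rcases eq_or_ne d 0 with rfl | hd
    · simp [hf0]
    have hd2 : (0:ℝ) < (d:ℝ)^2 := by positivity
    simp only [hf]
    split_ifs with h
    · rw [norm_div, norm_pow, Real.norm_natCast, norm_mul, Real.norm_natCast, Real.norm_eq_abs]
      refine div_le_div₀ (by positivity) ?_ hd2 le_rfl
      have h1' : |((moebius d : ℤ) : ℝ)| ≤ 1 := by exact_mod_cast abs_moebius_le_one (n := d)
      have h2' : (Nat.gcd d q : ℝ) ≤ (q : ℝ) := by
        exact_mod_cast Nat.le_of_dvd h0 (Nat.gcd_dvd_right d q)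
      calc |((moebius d : ℤ) : ℝ)| * (Nat.gcd d q : ℝ) ≤ 1 * (q : ℝ) :=
            mul_le_mul h1' h2' (by positivity) one_pos.le
        _ = q := one_mul _
    · simp
      positivity
  have hsum : Summable (fun d : ℕ => ‖f d‖) :=
    Summable.of_nonneg_of_le (fun _ => norm_nonneg _) hfle (aux_sum_sq q)
  -- Euler product for f
  have HF := EulerProduct.eulerProduct_hasProd_mulIndicator hf1 hmul hsum hf0
  -- Euler product for moebius/n^2
  have hg1 : (fun n : ℕ => (moebius n : ℝ) / (n : ℝ) ^ 2) 1 = 1 := by simp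
  have hg0 : (fun n : ℕ => (moebius n : ℝ) / (n : ℝ) ^ 2) 0 = 0 := by simp
  have hgmul : ∀ {m n : ℕ}, Nat.Coprime m n →
      (fun n : ℕ => (moebius n : ℝ) / (n : ℝ) ^ 2) (m * n) =
      (fun n : ℕ => (moebius n : ℝ) / (n : ℝ) ^ 2) m *
      (fun n : ℕ => (moebius n : ℝ) / (n : ℝ) ^ 2) n := by
    intro m n hmn
    simp only
    rw [isMultiplicative_moebius.map_mul_of_coprime hmn]
    push_cast
    ring
  have HG := EulerProduct.eulerProduct_hasProd_mulIndicator hg1 hgmul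
    aux_moebius_norm_summable hg0
  rw [aux_moebius_hasSum.tsum_eq] at HG
  -- the correction factor
  set w : ℕ → ℝ := fun p =>
    if p ∈ N.primeFactors then (if p ∣ q1 then (1 - 1/(p:ℝ)^2)⁻¹ else (1 + 1/(p:ℝ))⁻¹) else 1
    with hw
  have HW : HasProd w (∏ p ∈ N.primeFactors, w p) :=
    hasProd_prod_of_ne_finset_one (fun p hp => if_neg hp)
  -- pointwise identity
  have hpoint : ∀ p : ℕ,
      Set.mulIndicator {p | Nat.Prime p}
          (fun p => ∑' e : ℕ, (moebius (p^e) : ℝ) / ((p^e : ℕ) : ℝ) ^ 2) p * w p =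
      Set.mulIndicator {p | Nat.Prime p} (fun p => ∑' e : ℕ, f (p^e)) p := by
    intro p
    by_cases hp : Nat.Prime p
    · have hps : p ∈ {p | Nat.Prime p} := hp
      have hp0 : (0:ℝ) < (p:ℝ) := by exact_mod_cast hp.pos
      have hp1 : (1:ℝ) < (p:ℝ) := by exact_mod_cast hp.one_lt
      have hgz : ∀ n, ¬ Squarefree n → (moebius n : ℝ) / (n : ℝ) ^ 2 = 0 := by
        intro n hn; simp [moebius_eq_zero_of_not_squarefree hn]
      rw [Set.mulIndicator_of_mem hps, Set.mulIndicator_of_mem hps]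
      have e1 : ∑' e : ℕ, (moebius (p^e) : ℝ) / ((p^e : ℕ) : ℝ) ^ 2 = 1 - 1/(p:ℝ)^2 := by
        have := aux_tsum_pow hp hgz
        push_cast at this ⊢
        rw [this]
        rw [moebius_apply_prime hp, moebius_apply_one]
        push_cast
        field_simp
        ring
      have e2 : ∑' e : ℕ, f (p^e) = 1 + f p := by
        have := aux_tsum_pow hp hfz
        rw [this, hf1]
      rw [e1, e2]
      have hne1 : (1:ℝ) - 1/(p:ℝ)^2 ≠ 0 := by
        have : 1/(p:ℝ)^2 < 1 := by
          rw [div_lt_one (by positivity)]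
          nlinarith
        linarith
      by_cases hq1 : p ∣ q1
      · have hmem : p ∈ N.primeFactors := by
          rw [Nat.mem_primeFactors]
          exact ⟨hp, dvd_mul_of_dvd_left hq1 q, hNne⟩
        have hfp : f p = 0 := by
          simp only [hf]
          rw [if_neg (fun hc => (Nat.Prime.coprime_iff_not_dvd hp).mp hc hq1)]
        have hwp : w p = (1 - 1/(p:ℝ)^2)⁻¹ := by
          simp only [hw]
          rw [if_pos hmem, if_pos hq1]
        rw [hwp, hfp, add_zero, mul_inv_cancel₀ hne1]
      · by_cases hqd : p ∣ q
        · have hmem : p ∈ N.primeFactors := by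
            rw [Nat.mem_primeFactors]
            exact ⟨hp, dvd_mul_of_dvd_right hqd q1, hNne⟩
          have hwp : w p = (1 + 1/(p:ℝ))⁻¹ := by
            simp only [hw]
            rw [if_pos hmem, if_neg hq1]
          have hfp : f p = -(1/(p:ℝ)) := by
            simp only [hf]
            rw [if_pos ((Nat.Prime.coprime_iff_not_dvd hp).mpr hq1),
              Nat.gcd_eq_left hqd, moebius_apply_prime hp]
            push_cast
            field_simp
          rw [hwp, hfp]
          have hne2 : (1:ℝ) + 1/(p:ℝ) ≠ 0 := by positivity
          field_simp
          ring
        · have hmem : p ∉ N.primeFactors := by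
            intro h
            rcases (Nat.Prime.dvd_mul hp).mp (Nat.dvd_of_mem_primeFactors h) with h' | h'
            exacts [hq1 h', hqd h']
          have hwp : w p = 1 := by
            simp only [hw]
            rw [if_neg hmem]
          have hfp : f p = -(1/(p:ℝ)^2) := by
            simp only [hf]
            rw [if_pos ((Nat.Prime.coprime_iff_not_dvd hp).mpr hq1),
              Nat.Coprime.gcd_eq_one ((Nat.Prime.coprime_iff_not_dvd hp).mpr hqd),
              moebius_apply_prime hp]
            push_cast
            ring
          rw [hwp, hfp, mul_one]
          ring
    · have hps : p ∉ {p | Nat.Prime p} := hp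
      rw [Set.mulIndicator_of_notMem hps, Set.mulIndicator_of_notMem hps]
      have hmem : p ∉ N.primeFactors := fun h => hp (Nat.prime_of_mem_primeFactors h)
      simp only [hw]
      rw [if_neg hmem]
      exact one_mul 1
  have Hmul := HG.mul HW
  have hfe : (fun b => {p | Nat.Prime p}.mulIndicator
        (fun p => ∑' e : ℕ, (moebius (p^e) : ℝ) / ((p^e : ℕ) : ℝ) ^ 2) b * w b)
      = {p | Nat.Prime p}.mulIndicator (fun p => ∑' e : ℕ, f (p^e)) :=
    funext fun p => hpoint p
  rw [hfe] at Hmul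
  have hkey : (∑' n : ℕ, f n) = 6 / π ^ 2 * ∏ p ∈ N.primeFactors, w p := HF.unique Hmul
  have hsplit : N.primeFactors = q1.primeFactors ∪ q.primeFactors :=
    Nat.primeFactors_mul h1.ne' h0.ne'
  have hdisj : Disjoint q1.primeFactors q.primeFactors :=
    Nat.Coprime.disjoint_primeFactors hcop
  have hW : (∏ p ∈ N.primeFactors, w p)
      = (∏ p ∈ q1.primeFactors, (1 - 1/(p:ℝ)^2)⁻¹) *
        ∏ p ∈ q.primeFactors, (1 + 1/(p:ℝ))⁻¹ := by
    rw [hsplit, Finset.prod_union hdisj]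
    congr 1
    · refine Finset.prod_congr rfl fun p hp => ?_
      have hmem : p ∈ N.primeFactors := by rw [hsplit]; exact Finset.mem_union_left _ hp
      simp only [hw]
      rw [if_pos hmem, if_pos (Nat.dvd_of_mem_primeFactors hp)]
    · refine Finset.prod_congr rfl fun p hp => ?_
      have hmem : p ∈ N.primeFactors := by rw [hsplit]; exact Finset.mem_union_right _ hp
      have hnd : ¬ p ∣ q1 := by
        intro hd
        exact (Nat.prime_of_mem_primeFactors hp).one_lt.ne'
          (Nat.eq_one_of_dvd_coprimes hcop hd (Nat.dvd_of_mem_primeFactors hp))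
      simp only [hw]
      rw [if_pos hmem, if_neg hnd]
  constructor
  · simpa [hf, Real.norm_eq_abs] using hsum
  · rw [hkey, hW]
    ring
end

section
/- The number of pairs (m, n) with n ≤ x, gcd(m, n) = 1, and λ₁n < m < λ₂n, where 0 ≤ λ₁ < λ₂ are fixed reals, satisfies S(x) = (3/π²)(λ₂ - λ₁)x² + O(x log x) as x → ∞. -/
open Filter Asymptotics Real

open Finset ArithmeticFunction
open scoped LSeries.notation
open scoped ArithmeticFunction.Moebius



-- L1: integer count in open interval
lemma countL1 (a b : ℝ) (ha : 0 ≤ a) (hab : a ≤ b) :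
    |((Finset.Ioo ⌊a⌋₊ ⌈b⌉₊).card : ℝ) - (b - a)| ≤ 1 := by
  rw [Nat.card_Ioo]
  have ha1 : (⌊a⌋₊ : ℝ) ≤ a := Nat.floor_le ha
  have ha2 : a < ⌊a⌋₊ + 1 := Nat.lt_floor_add_one a
  have hb1 : (⌈b⌉₊ : ℝ) < b + 1 := Nat.ceil_lt_add_one (le_trans ha hab)
  have hb2 : b ≤ (⌈b⌉₊ : ℝ) := Nat.le_ceil b
  rcases le_or_gt ⌈b⌉₊ (⌊a⌋₊ + 1) with h | h
  · have h0 : ⌈b⌉₊ - ⌊a⌋₊ - 1 = 0 := by omega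
    rw [h0]
    have hb : (⌈b⌉₊:ℝ) ≤ (⌊a⌋₊:ℝ) + 1 := by exact_mod_cast h
    rw [abs_le]; constructor <;> push_cast <;> nlinarith
  · have hc : ((⌈b⌉₊ - ⌊a⌋₊ - 1 : ℕ) : ℝ) = (⌈b⌉₊:ℝ) - (⌊a⌋₊:ℝ) - 1 := by
      have h1 : (1:ℕ) ≤ ⌈b⌉₊ - ⌊a⌋₊ := by omega
      rw [Nat.cast_sub (by omega), Nat.cast_sub (by omega)]
      push_cast; ring
    rw [hc, abs_le]; constructor <;> nlinarith

-- L2: multiples count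
lemma countL2 (a b : ℝ) (ha : 0 ≤ a) (d : ℕ) (hd : 0 < d) :
    ((Finset.Icc 1 ⌈b⌉₊).filter (fun m : ℕ => (a < (m:ℝ) ∧ (m : ℝ) < b) ∧ d ∣ m)).card
      = (Finset.Ioo ⌊a / d⌋₊ ⌈b / d⌉₊).card := by
  have hd' : (0:ℝ) < d := by exact_mod_cast hd
  apply Finset.card_bij' (fun m _ => m / d) (fun k _ => d * k)
  · rintro m hm
    simp only [mem_filter, Finset.mem_Icc] at hm
    obtain ⟨⟨hm1, hm2⟩, ⟨ham, hmb⟩, hdm⟩ := hm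
    obtain ⟨k, rfl⟩ := hdm
    rw [Nat.mul_div_cancel_left _ hd]
    simp only [Finset.mem_Ioo]
    constructor
    · rw [Nat.floor_lt (by positivity), div_lt_iff₀ hd']
      calc a < (d * k : ℕ) := ham
        _ = k * d := by push_cast; ring
    · rw [Nat.lt_ceil, lt_div_iff₀ hd']
      calc ((k : ℝ) * d) = ((d * k : ℕ) : ℝ) := by push_cast; ring
        _ < b := hmb
  · rintro k hk
    simp only [Finset.mem_Ioo] at hk
    obtain ⟨hk1, hk2⟩ := hk
    have hak : a < ((d * k : ℕ) : ℝ) := by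
      have := (Nat.floor_lt (by positivity : (0:ℝ) ≤ a / d)).mp hk1
      rw [div_lt_iff₀ hd'] at this
      calc a < k * d := this
        _ = ((d * k : ℕ) : ℝ) := by push_cast; ring
    have hkb : ((d * k : ℕ) : ℝ) < b := by
      have := Nat.lt_ceil.mp hk2
      rw [lt_div_iff₀ hd'] at this
      calc ((d * k : ℕ) : ℝ) = k * d := by push_cast; ring
        _ < b := this
    have hk0 : 0 < k := lt_of_le_of_lt (Nat.zero_le _) hk1
    simp only [mem_filter, Finset.mem_Icc]
    refine ⟨⟨Nat.one_le_iff_ne_zero.mpr (Nat.mul_ne_zero hd.ne' hk0.ne'), ?_⟩,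
      ⟨hak, hkb⟩, ⟨k, rfl⟩⟩
    have : (d * k : ℕ) < ⌈b⌉₊ := by rw [Nat.lt_ceil]; exact hkb
    omega
  · rintro m hm
    simp only [mem_filter, Finset.mem_Icc] at hm
    obtain ⟨k, rfl⟩ := hm.2.2
    rw [Nat.mul_div_cancel_left _ hd]
  · rintro k hk
    rw [Nat.mul_div_cancel_left _ hd]

-- sum of μ over divisors of gcd
lemma moebius_gcd (n : ℕ) (hn : n ≠ 0) (m : ℕ) :
    (if Nat.Coprime m n then (1:ℤ) else 0)
      = ∑ d ∈ n.divisors.filter (· ∣ m), μ d := by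
  have h1 : n.divisors.filter (· ∣ m) = (Nat.gcd m n).divisors := by
    ext d
    simp only [mem_filter, Nat.mem_divisors, Nat.dvd_gcd_iff]
    simp only [Ne, Nat.gcd_eq_zero_iff]
    constructor
    · rintro ⟨⟨h1, h2⟩, h3⟩
      exact ⟨⟨h3, h1⟩, fun h => hn h.2⟩
    · rintro ⟨⟨h1, h2⟩, h3⟩
      exact ⟨⟨h2, hn⟩, h1⟩
  rw [h1]
  have := (congrArg (fun f : ArithmeticFunction ℤ => f (Nat.gcd m n)) moebius_mul_coe_zeta)
  simp only [coe_mul_zeta_apply, one_apply] at this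
  rw [this]

-- L3: inner card via moebius
lemma cardL3 (l1 l2 : ℝ) (h1 : 0 ≤ l1) (n : ℕ) (hn : n ≠ 0) :
    (((Finset.Icc 1 ⌈l2 * n⌉₊).filter
        (fun m => Nat.Coprime m n ∧ l1 * n < m ∧ (m : ℝ) < l2 * n)).card : ℤ)
      = ∑ d ∈ n.divisors,
          μ d * ((Finset.Ioo ⌊l1 * n / d⌋₊ ⌈l2 * n / d⌉₊).card : ℤ) := by
  have hrw : (fun m : ℕ => Nat.Coprime m n ∧ l1 * n < m ∧ (m : ℝ) < l2 * n)
      = (fun m : ℕ => (l1 * n < (m:ℝ) ∧ (m : ℝ) < l2 * n) ∧ Nat.Coprime m n) :=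
    funext fun m => propext (by tauto)
  rw [Finset.filter_congr (fun m _ => iff_of_eq (congrFun hrw m)), ← Finset.filter_filter]
  set B := (Finset.Icc 1 ⌈l2 * n⌉₊).filter (fun m : ℕ => l1 * n < (m:ℝ) ∧ (m : ℝ) < l2 * n)
    with hB
  rw [Finset.card_filter]
  push_cast
  have step1 : ∑ m ∈ B, (if Nat.Coprime m n then (1:ℤ) else 0)
      = ∑ m ∈ B, ∑ d ∈ n.divisors, (if d ∣ m then μ d else 0) := by
    refine Finset.sum_congr rfl fun m _ => ?_
    rw [moebius_gcd n hn m, Finset.sum_filter]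
  rw [step1, Finset.sum_comm]
  refine Finset.sum_congr rfl fun d hd => ?_
  have hd0 : 0 < d := Nat.pos_of_mem_divisors hd
  rw [← Finset.sum_filter]
  rw [Finset.sum_const, hB, Finset.filter_filter]
  have := countL2 (l1 * n) (l2 * n) (by positivity) d hd0
  rw [this]
  simp [mul_comm]

-- L4: per-n estimate
lemma cardL4 (l1 l2 : ℝ) (h1 : 0 ≤ l1) (h12 : l1 ≤ l2) (n : ℕ) (hn : n ≠ 0) :
    |(((Finset.Icc 1 ⌈l2 * n⌉₊).filter
        (fun m => Nat.Coprime m n ∧ l1 * n < m ∧ (m : ℝ) < l2 * n)).card : ℝ)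
      - (l2 - l1) * n * ∑ d ∈ n.divisors, (μ d : ℝ) / d|
      ≤ (n.divisors.card : ℝ) := by
  have h3 := cardL3 l1 l2 h1 n hn
  have hc : (((Finset.Icc 1 ⌈l2 * n⌉₊).filter
      (fun m => Nat.Coprime m n ∧ l1 * n < m ∧ (m : ℝ) < l2 * n)).card : ℝ)
      = ∑ d ∈ n.divisors, (μ d : ℝ) * ((Finset.Ioo ⌊l1 * n / d⌋₊ ⌈l2 * n / d⌉₊).card : ℝ) := by
    exact_mod_cast congrArg (fun z : ℤ => (z : ℝ)) h3
  rw [hc, Finset.mul_sum, ← Finset.sum_sub_distrib]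
  refine le_trans (Finset.abs_sum_le_sum_abs _ _) ?_
  have : ((n.divisors.card : ℕ) : ℝ) = ∑ _d ∈ n.divisors, (1:ℝ) := by
    rw [Finset.card_eq_sum_ones]; push_cast; ring
  rw [this]
  refine Finset.sum_le_sum fun d hd => ?_
  have hd0 : 0 < d := Nat.pos_of_mem_divisors hd
  have hd0' : (0:ℝ) < d := by exact_mod_cast hd0
  have key : (l2 - l1) * n * ((μ d : ℝ) / d) = (μ d : ℝ) * ((l2 * n / d) - (l1 * n / d)) := by
    field_simp
  rw [key, ← mul_sub, abs_mul]
  have h1' := countL1 (l1 * n / d) (l2 * n / d) (by positivity)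
    (by gcongr)
  have hmu : |(μ d : ℝ)| ≤ 1 := by
    exact_mod_cast (abs_moebius_le_one (n := d))
  calc |(μ d : ℝ)| * |((Finset.Ioo ⌊l1 * n / d⌋₊ ⌈l2 * n / d⌉₊).card : ℝ) - (l2 * n / d - l1 * n / d)|
      ≤ 1 * 1 := mul_le_mul hmu h1' (abs_nonneg _) zero_le_one
    _ = 1 := one_mul 1

-- swap lemma
lemma swapL (N : ℕ) (f : ℕ → ℕ → ℝ) :
    ∑ n ∈ Finset.Icc 1 N, ∑ d ∈ n.divisors, f d n
      = ∑ d ∈ Finset.Icc 1 N, ∑ q ∈ Finset.Icc 1 (N / d), f d (d * q) := by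
  rw [Finset.sum_sigma', Finset.sum_sigma']
  refine Finset.sum_nbij' (fun p => ⟨p.2, p.1 / p.2⟩) (fun p => ⟨p.1 * p.2, p.1⟩)
    ?_ ?_ ?_ ?_ ?_
  · rintro ⟨n, d⟩ hp
    simp only [Finset.mem_sigma, Finset.mem_Icc, Nat.mem_divisors] at hp ⊢
    obtain ⟨⟨hn1, hn2⟩, hd, hn0⟩ := hp
    have hd0 : 0 < d := Nat.pos_of_dvd_of_pos hd (by omega)
    refine ⟨⟨hd0, le_trans (Nat.le_of_dvd (by omega) hd) hn2⟩, ?_, ?_⟩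
    · exact (Nat.one_le_div_iff hd0).mpr (Nat.le_of_dvd (by omega) hd)
    · exact Nat.div_le_div_right hn2
  · rintro ⟨d, q⟩ hp
    simp only [Finset.mem_sigma, Finset.mem_Icc, Nat.mem_divisors] at hp ⊢
    obtain ⟨⟨hd1, hd2⟩, hq1, hq2⟩ := hp
    refine ⟨⟨Nat.one_le_iff_ne_zero.mpr (Nat.mul_ne_zero (by omega) (by omega)), ?_⟩,
      Dvd.intro q rfl, Nat.mul_ne_zero (by omega) (by omega)⟩
    calc d * q ≤ d * (N / d) := Nat.mul_le_mul_left d hq2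
      _ ≤ N := Nat.mul_div_le N d
  · rintro ⟨n, d⟩ hp
    simp only [Finset.mem_sigma, Finset.mem_Icc, Nat.mem_divisors] at hp
    obtain ⟨_, hd, _⟩ := hp
    simp [Nat.mul_div_cancel' hd]
  · rintro ⟨d, q⟩ hp
    simp only [Finset.mem_sigma, Finset.mem_Icc] at hp
    have hd0 : 0 < d := by omega
    simp [Nat.mul_div_cancel_left _ hd0]
  · rintro ⟨n, d⟩ hp
    simp only [Finset.mem_sigma, Finset.mem_Icc, Nat.mem_divisors] at hp
    obtain ⟨_, hd, _⟩ := hp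
    simp [Nat.mul_div_cancel' hd]

-- harmonic bound
lemma harmL (N : ℕ) : ∑ d ∈ Finset.Icc 1 N, (d:ℝ)⁻¹ ≤ 1 + Real.log N := by
  have h := harmonic_le_one_add_log N
  rw [harmonic_eq_sum_Icc] at h
  push_cast at h
  exact h


lemma summable_g : Summable (fun d : ℕ => |(μ d : ℝ) / (d:ℝ)^2|) := by
  apply Summable.of_nonneg_of_le (fun d => abs_nonneg _) (fun d => ?_)
    ((Real.summable_one_div_nat_pow (p := 2)).mpr one_lt_two)
  rcases eq_or_ne d 0 with rfl | hd
  · simp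
  · rw [abs_div, abs_of_nonneg (by positivity : (0:ℝ) ≤ (d:ℝ)^2), div_le_div_iff_of_pos_right
      (by positivity), ← Int.cast_abs]
    exact_mod_cast (abs_moebius_le_one (n := d))

lemma moebius_tsum_sq : ∑' d : ℕ, (μ d : ℝ) / (d:ℝ)^2 = 6 / π ^ 2 := by
  have hs : 1 < (2:ℂ).re := by norm_num
  have h1 := ArithmeticFunction.LSeries_zeta_mul_Lseries_moebius hs
  rw [ArithmeticFunction.LSeries_zeta_eq_riemannZeta hs, riemannZeta_two] at h1
  have hpi : (π:ℂ) ^ 2 ≠ 0 := by simp [Real.pi_ne_zero]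
  have h2 : L ↗μ 2 = 6 / (π:ℂ)^2 := by
    field_simp at h1 ⊢
    linear_combination h1
  have hterm : ∀ n : ℕ, ((((μ n : ℝ) / (n:ℝ)^2) : ℝ) : ℂ) = LSeries.term ↗μ 2 n := by
    intro n
    rcases eq_or_ne n 0 with rfl | hn
    · simp [LSeries.term]
    · rw [LSeries.term_of_ne_zero hn]
      have : (n:ℂ) ^ (2:ℂ) = ((n:ℂ))^(2:ℕ) := by
        rw [show (2:ℂ) = ((2:ℕ):ℂ) by norm_num, Complex.cpow_natCast]
      rw [this]
      push_cast
      ring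
  have h3 : ((∑' d : ℕ, (μ d : ℝ) / (d:ℝ)^2 : ℝ) : ℂ) = L ↗μ 2 := by
    rw [LSeries, Complex.ofReal_tsum]
    exact tsum_congr hterm
  rw [h2] at h3
  have : ((6 / π ^ 2 : ℝ) : ℂ) = 6 / (π:ℂ)^2 := by push_cast; ring
  exact Complex.ofReal_injective (by rw [h3, this])

lemma tailL (N : ℕ) (hN : 1 ≤ N) :
    ∑' k : ℕ, (((k + N + 1 : ℕ) : ℝ)^2)⁻¹ ≤ (N:ℝ)⁻¹ := by
  have hsum : Summable (fun k : ℕ => (((k + N + 1 : ℕ) : ℝ)^2)⁻¹) := by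
    have : Summable (fun n : ℕ => (((n:ℝ))^2)⁻¹) := by
      simpa [one_div] using (Real.summable_one_div_nat_pow (p := 2)).mpr one_lt_two
    have := (summable_nat_add_iff (N+1)).mpr this
    refine this.congr fun k => ?_
    push_cast
    ring_nf
  refine hsum.tsum_le_of_sum_le fun u => ?_
  set B := u.sup _root_.id with hB
  have hsub : u ⊆ Finset.range (B + 1) := fun k hk =>
    Finset.mem_range.mpr (Nat.lt_succ_of_le (Finset.le_sup (f := _root_.id) hk))
  have h1 : ∑ k ∈ u, (((k + N + 1 : ℕ) : ℝ)^2)⁻¹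
      ≤ ∑ k ∈ Finset.range (B + 1), (((k + N + 1 : ℕ) : ℝ)^2)⁻¹ :=
    Finset.sum_le_sum_of_subset_of_nonneg hsub (fun k _ _ => by positivity)
  have h2 : ∑ k ∈ Finset.range (B + 1), (((k + N + 1 : ℕ) : ℝ)^2)⁻¹
      = ∑ i ∈ Finset.Ioc N (N + 1 + B), (((i:ℝ))^2)⁻¹ := by
    refine Finset.sum_nbij' (fun k => k + N + 1) (fun i => i - N - 1) ?_ ?_ ?_ ?_ ?_
    · intro k hk
      simp only [Finset.mem_range] at hk
      simp only [Finset.mem_Ioc]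
      omega
    · intro i hi
      simp only [Finset.mem_Ioc] at hi
      simp only [Finset.mem_range]
      omega
    · intro k _; show k + N + 1 - N - 1 = k; omega
    · intro i hi; show i - N - 1 + N + 1 = i; simp only [Finset.mem_Ioc] at hi; omega
    · intro k _; norm_num
  have h3 := sum_Ioc_inv_sq_le_sub (α := ℝ) (k := N) (n := N + 1 + B) (by omega) (by omega)
  have h4 : (0:ℝ) ≤ ((N + 1 + B : ℕ):ℝ)⁻¹ := by positivity
  calc ∑ k ∈ u, (((k + N + 1 : ℕ) : ℝ)^2)⁻¹ ≤ _ := h1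
    _ = _ := h2
    _ ≤ (N:ℝ)⁻¹ - ((N + 1 + B : ℕ):ℝ)⁻¹ := by exact_mod_cast h3
    _ ≤ (N:ℝ)⁻¹ := by linarith

lemma partialL (N : ℕ) (hN : 1 ≤ N) :
    |∑ d ∈ Finset.Icc 1 N, (μ d : ℝ) / (d:ℝ)^2 - 6 / π ^ 2| ≤ (N:ℝ)⁻¹ := by
  have hsum : Summable (fun d : ℕ => (μ d : ℝ) / (d:ℝ)^2) := summable_g.of_abs
  have hrange : Finset.range (N + 1) = insert 0 (Finset.Icc 1 N) := by
    ext k; simp only [Finset.mem_range, Finset.mem_insert, Finset.mem_Icc]; omega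
  have h0 : ∑ d ∈ Finset.range (N + 1), (μ d : ℝ) / (d:ℝ)^2
      = ∑ d ∈ Finset.Icc 1 N, (μ d : ℝ) / (d:ℝ)^2 := by
    rw [hrange, Finset.sum_insert (by simp)]
    simp
  have hsplit := Summable.sum_add_tsum_nat_add (f := fun d : ℕ => (μ d : ℝ) / (d:ℝ)^2) (N + 1) hsum
  rw [h0] at hsplit
  have htail : |∑' k : ℕ, (μ (k + (N+1)) : ℝ) / ((k + (N+1) : ℕ):ℝ)^2| ≤ (N:ℝ)⁻¹ := by
    have habs : Summable (fun k : ℕ => |(μ (k + (N+1)) : ℝ) / ((k + (N+1) : ℕ):ℝ)^2|) := by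
      have := (summable_nat_add_iff (f := fun d : ℕ => |(μ d : ℝ) / (d:ℝ)^2|) (N+1)).mpr summable_g
      exact this.congr fun k => by push_cast; ring_nf
    have hnorm : Summable (fun k : ℕ => ‖(μ (k + (N+1)) : ℝ) / ((k + (N+1) : ℕ):ℝ)^2‖) := by
      simpa only [Real.norm_eq_abs] using habs
    have h5 := norm_tsum_le_tsum_norm hnorm
    simp only [Real.norm_eq_abs] at h5
    refine le_trans h5 ?_
    refine le_trans (Summable.tsum_le_tsum (fun k => ?_) habs ?_) (tailL N hN)
    · rw [abs_div, abs_of_nonneg (by positivity : (0:ℝ) ≤ ((k + (N+1):ℕ):ℝ)^2)]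
      have hk1 : (1:ℝ) ≤ ((k + (N+1):ℕ):ℝ) := by exact_mod_cast Nat.one_le_iff_ne_zero.mpr (by omega)
      have hmu : |(μ (k + (N+1)) : ℝ)| ≤ 1 := by
        rw [← Int.cast_abs]; exact_mod_cast (abs_moebius_le_one (n := k + (N+1)))
      have : ((k + N + 1 : ℕ):ℝ) = ((k + (N+1) : ℕ):ℝ) := by push_cast; ring
      rw [this, inv_eq_one_div]
      rw [div_le_div_iff_of_pos_right (by positivity)]
      exact hmu
    · have : Summable (fun k : ℕ => (((k + N + 1 : ℕ) : ℝ)^2)⁻¹) := by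
        have h2 : Summable (fun n : ℕ => (((n:ℝ))^2)⁻¹) := by
          simpa [one_div] using (Real.summable_one_div_nat_pow (p := 2)).mpr one_lt_two
        have := (summable_nat_add_iff (N+1)).mpr h2
        refine this.congr fun k => ?_
        push_cast; ring_nf
      exact this
  have key : ∑ d ∈ Finset.Icc 1 N, (μ d : ℝ) / (d:ℝ)^2 - 6 / π ^ 2
      = -(∑' k : ℕ, (μ (k + (N+1)) : ℝ) / ((k + (N+1) : ℕ):ℝ)^2) := by
    rw [← moebius_tsum_sq, ← hsplit]; ring
  rw [key, abs_neg]
  exact htail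

lemma gaussL (K : ℕ) : ∑ q ∈ Finset.Icc 1 K, (q:ℝ) = K*(K+1)/2 := by
  induction K with
  | zero => simp
  | succ k ih =>
    rw [Finset.sum_Icc_succ_top (by omega), ih]
    push_cast; ring

lemma mainN (l1 l2 : ℝ) (h1 : 0 ≤ l1) (h12 : l1 ≤ l2) (N : ℕ) (hN : 1 ≤ N) :
    |(∑ n ∈ Finset.Icc 1 N,
        (((Finset.Icc 1 ⌈l2 * n⌉₊).filter
          (fun m => Nat.Coprime m n ∧ l1 * n < m ∧ (m : ℝ) < l2 * n)).card : ℝ))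
      - (3 / π ^ 2) * (l2 - l1) * (N:ℝ)^2|
      ≤ (l2 - l1) * (2 * N * (1 + Real.log N)) + N * (1 + Real.log N) := by
  have hlogN : 0 ≤ Real.log N := Real.log_natCast_nonneg N
  have hNr : (1:ℝ) ≤ (N:ℝ) := by exact_mod_cast hN
  set S := ∑ n ∈ Finset.Icc 1 N,
      (((Finset.Icc 1 ⌈l2 * n⌉₊).filter
        (fun m => Nat.Coprime m n ∧ l1 * n < m ∧ (m : ℝ) < l2 * n)).card : ℝ) with hS
  set Φ := ∑ n ∈ Finset.Icc 1 N, (n:ℝ) * ∑ d ∈ n.divisors, (μ d:ℝ)/d with hΦ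
  -- Step A
  have stepA : |S - (l2 - l1) * Φ| ≤ ∑ n ∈ Finset.Icc 1 N, (n.divisors.card : ℝ) := by
    have hmul : (l2 - l1) * Φ
        = ∑ n ∈ Finset.Icc 1 N, (l2 - l1) * (n:ℝ) * ∑ d ∈ n.divisors, (μ d:ℝ)/d := by
      rw [hΦ, Finset.mul_sum]
      exact Finset.sum_congr rfl fun n _ => by ring
    rw [hS, hmul, ← Finset.sum_sub_distrib]
    refine le_trans (Finset.abs_sum_le_sum_abs _ _) (Finset.sum_le_sum fun n hn => ?_)
    have hn0 : n ≠ 0 := by simp only [Finset.mem_Icc] at hn; omega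
    exact cardL4 l1 l2 h1 h12 n hn0
  -- Step B : divisor count sum
  have hD : ∑ n ∈ Finset.Icc 1 N, (n.divisors.card : ℝ) ≤ N * (1 + Real.log N) := by
    have hswap := swapL N (fun _ _ => (1:ℝ))
    have e1 : ∑ n ∈ Finset.Icc 1 N, (n.divisors.card : ℝ)
        = ∑ n ∈ Finset.Icc 1 N, ∑ _d ∈ n.divisors, (1:ℝ) := by
      refine Finset.sum_congr rfl fun n _ => ?_
      rw [Finset.sum_const]; simp
    rw [e1, hswap]
    have e2 : ∀ d ∈ Finset.Icc 1 N, ∑ _q ∈ Finset.Icc 1 (N/d), (1:ℝ) ≤ (N:ℝ)/d := by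
      intro d hd
      simp only [Finset.mem_Icc] at hd
      rw [Finset.sum_const, nsmul_eq_mul, mul_one, Nat.card_Icc]
      calc ((N/d + 1 - 1 : ℕ) : ℝ) = ((N/d : ℕ) : ℝ) := by norm_num
        _ ≤ (N:ℝ)/d := Nat.cast_div_le
    calc ∑ d ∈ Finset.Icc 1 N, ∑ _q ∈ Finset.Icc 1 (N/d), (1:ℝ)
        ≤ ∑ d ∈ Finset.Icc 1 N, (N:ℝ)/d := Finset.sum_le_sum e2
      _ = (N:ℝ) * ∑ d ∈ Finset.Icc 1 N, (d:ℝ)⁻¹ := by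
          rw [Finset.mul_sum]; exact Finset.sum_congr rfl fun d _ => by rw [div_eq_mul_inv]
      _ ≤ (N:ℝ) * (1 + Real.log N) := by
          have := harmL N
          have h0 : (0:ℝ) ≤ N := by positivity
          nlinarith [this]
  -- Step C : swap for Φ
  have hΦswap : Φ = ∑ d ∈ Finset.Icc 1 N, (μ d:ℝ) * ((N/d : ℕ) * ((N/d : ℕ) + 1) / 2) := by
    have hswap := swapL N (fun d n => (μ d:ℝ)/d * n)
    have e1 : Φ = ∑ n ∈ Finset.Icc 1 N, ∑ d ∈ n.divisors, (μ d:ℝ)/d * n := by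
      rw [hΦ]
      refine Finset.sum_congr rfl fun n _ => ?_
      rw [Finset.mul_sum]
      exact Finset.sum_congr rfl fun d _ => by ring
    rw [e1, hswap]
    refine Finset.sum_congr rfl fun d hd => ?_
    simp only [Finset.mem_Icc] at hd
    have hd0 : (d:ℝ) ≠ 0 := by
      have : 0 < d := by omega
      positivity
    have e2 : ∀ q : ℕ, (μ d:ℝ)/d * ((d*q : ℕ):ℝ) = (μ d:ℝ) * q := by
      intro q; push_cast; field_simp
    rw [Finset.sum_congr rfl fun q _ => e2 q, ← Finset.mul_sum, gaussL]
  -- Step D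
  have stepD : |Φ - (N:ℝ)^2/2 * ∑ d ∈ Finset.Icc 1 N, (μ d:ℝ)/(d:ℝ)^2|
      ≤ (3/2) * N * (1 + Real.log N) := by
    rw [hΦswap, Finset.mul_sum, ← Finset.sum_sub_distrib]
    refine le_trans (Finset.abs_sum_le_sum_abs _ _) ?_
    have bound : ∀ d ∈ Finset.Icc 1 N,
        |(μ d:ℝ) * ((N/d : ℕ) * ((N/d : ℕ) + 1) / 2) - (N:ℝ)^2/2 * ((μ d:ℝ)/(d:ℝ)^2)|
          ≤ (3/2) * ((N:ℝ)/d) := by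
      intro d hd
      simp only [Finset.mem_Icc] at hd
      have hdpos : 0 < d := by omega
      have hdr : (0:ℝ) < d := by exact_mod_cast hdpos
      set K := N / d with hK
      set r := (N:ℝ)/d with hr
      have hr0 : 0 ≤ r := by positivity
      have hKr : (K:ℝ) ≤ r := Nat.cast_div_le
      have hrK : r < (K:ℝ) + 1 := by
        have hnat : N < (K + 1) * d := by
          calc N = d * K + N % d := by rw [hK]; exact (Nat.div_add_mod N d).symm
            _ < d * K + d := by have := Nat.mod_lt N hdpos; omega
            _ = (K + 1) * d := by ring
        rw [hr, div_lt_iff₀ hdr]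
        exact_mod_cast hnat
      have e3 : (N:ℝ)^2/2 * ((μ d:ℝ)/(d:ℝ)^2) = (μ d:ℝ) * (r^2/2) := by
        rw [hr]; field_simp
      rw [e3, ← mul_sub, abs_mul]
      have hmu : |(μ d:ℝ)| ≤ 1 := by
        rw [← Int.cast_abs]; exact_mod_cast (abs_moebius_le_one (n := d))
      have hgap : |(K:ℝ) * ((K:ℝ) + 1) / 2 - r^2/2| ≤ (3/2) * r := by
        rw [abs_le]
        constructor <;> nlinarith
      calc |(μ d:ℝ)| * |(K:ℝ) * ((K:ℝ) + 1) / 2 - r^2/2|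
          ≤ 1 * ((3/2) * r) := mul_le_mul hmu hgap (abs_nonneg _) zero_le_one
        _ = (3/2) * r := one_mul _
    refine le_trans (Finset.sum_le_sum bound) ?_
    calc ∑ d ∈ Finset.Icc 1 N, (3/2) * ((N:ℝ)/d)
        = (3/2) * (N:ℝ) * ∑ d ∈ Finset.Icc 1 N, (d:ℝ)⁻¹ := by
          rw [Finset.mul_sum]; exact Finset.sum_congr rfl fun d _ => by rw [div_eq_mul_inv]; ring
      _ ≤ (3/2) * N * (1 + Real.log N) := by
          have := harmL N
          nlinarith [this]
  -- Step E
  have stepE : |(N:ℝ)^2/2 * ∑ d ∈ Finset.Icc 1 N, (μ d:ℝ)/(d:ℝ)^2 - 3/π^2 * (N:ℝ)^2|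
      ≤ (N:ℝ)/2 := by
    have hp := partialL N hN
    have e4 : (N:ℝ)^2/2 * ∑ d ∈ Finset.Icc 1 N, (μ d:ℝ)/(d:ℝ)^2 - 3/π^2 * (N:ℝ)^2
        = (N:ℝ)^2/2 * (∑ d ∈ Finset.Icc 1 N, (μ d:ℝ)/(d:ℝ)^2 - 6/π^2) := by
      have hpi : (π:ℝ) ≠ 0 := Real.pi_ne_zero
      field_simp; ring
    rw [e4, abs_mul, abs_of_nonneg (by positivity : (0:ℝ) ≤ (N:ℝ)^2/2)]
    have hNinv : (N:ℝ)⁻¹ ≤ 1/(N:ℝ) := by rw [one_div]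
    calc (N:ℝ)^2/2 * |∑ d ∈ Finset.Icc 1 N, (μ d:ℝ)/(d:ℝ)^2 - 6/π^2|
        ≤ (N:ℝ)^2/2 * (N:ℝ)⁻¹ := by
          apply mul_le_mul_of_nonneg_left hp (by positivity)
      _ = (N:ℝ)/2 := by field_simp
  -- combine
  set Z := ∑ d ∈ Finset.Icc 1 N, (μ d:ℝ)/(d:ℝ)^2 with hZ
  have tri : |S - 3/π^2 * (l2-l1) * (N:ℝ)^2|
      ≤ |S - (l2-l1)*Φ| + (l2-l1) * |Φ - (N:ℝ)^2/2 * Z|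
        + (l2-l1) * |(N:ℝ)^2/2 * Z - 3/π^2 * (N:ℝ)^2| := by
    have h12' : 0 ≤ l2 - l1 := by linarith
    have habs1 : (l2-l1) * |Φ - (N:ℝ)^2/2 * Z|
        = |(l2-l1)*Φ - (l2-l1)*((N:ℝ)^2/2 * Z)| := by
      rw [← abs_of_nonneg h12', ← abs_mul, mul_sub, abs_of_nonneg h12']
    have habs2 : (l2-l1) * |(N:ℝ)^2/2 * Z - 3/π^2 * (N:ℝ)^2|
        = |(l2-l1)*((N:ℝ)^2/2 * Z) - 3/π^2*(l2-l1)*(N:ℝ)^2| := by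
      rw [← abs_of_nonneg h12', ← abs_mul, mul_sub, abs_of_nonneg h12']
      ring_nf
    rw [habs1, habs2]
    calc |S - 3/π^2 * (l2-l1) * (N:ℝ)^2|
        = |(S - (l2-l1)*Φ) + ((l2-l1)*Φ - (l2-l1)*((N:ℝ)^2/2 * Z))
          + ((l2-l1)*((N:ℝ)^2/2 * Z) - 3/π^2*(l2-l1)*(N:ℝ)^2)| := by
          ring_nf
      _ ≤ _ := by
          refine le_trans (abs_add_le _ _) ?_
          gcongr
          exact abs_add_le _ _
  have h12' : 0 ≤ l2 - l1 := by linarith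
  calc |S - 3/π^2 * (l2-l1) * (N:ℝ)^2| ≤ _ := tri
    _ ≤ N * (1 + Real.log N) + (l2-l1) * ((3/2) * N * (1 + Real.log N)) + (l2-l1) * ((N:ℝ)/2) := by
        gcongr
        · exact le_trans stepA hD
    _ ≤ (l2 - l1) * (2 * N * (1 + Real.log N)) + N * (1 + Real.log N) := by
        nlinarith [mul_nonneg (mul_nonneg h12' (by linarith : (0:ℝ) ≤ (N:ℝ))) hlogN]

theorem stmt_8 (l1 l2 : ℝ) (h1 : 0 ≤ l1) (h12 : l1 < l2) :
    (fun x : ℝ =>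
        ((∑ n ∈ Finset.Icc 1 ⌊x⌋₊,
            ((Finset.Icc 1 ⌈l2 * n⌉₊).filter
              (fun m => Nat.Coprime m n ∧ l1 * n < m ∧ (m : ℝ) < l2 * n)).card : ℝ)) -
          (3 / π ^ 2) * (l2 - l1) * x ^ 2) =O[atTop]
      (fun x : ℝ => x * Real.log x) := by
  have h12le : l1 ≤ l2 := le_of_lt h12
  set C : ℝ := 4 * (l2 - l1) + 1 with hC
  have hC0 : 0 < C := by simp only [hC]; nlinarith
  have hpi2 : (3:ℝ) / π ^ 2 ≤ 1 := by
    have := Real.pi_gt_three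
    rw [div_le_one (by positivity)]
    nlinarith
  have hmain : ∀ x : ℝ, 1 ≤ x →
      |(∑ n ∈ Finset.Icc 1 ⌊x⌋₊,
          (((Finset.Icc 1 ⌈l2 * n⌉₊).filter
            (fun m => Nat.Coprime m n ∧ l1 * n < m ∧ (m : ℝ) < l2 * n)).card : ℝ))
        - (3 / π ^ 2) * (l2 - l1) * x ^ 2| ≤ C * (x * (1 + Real.log x)) := by
    intro x hx
    set N := ⌊x⌋₊ with hNdef
    have hN1 : 1 ≤ N := Nat.le_floor (by exact_mod_cast hx)
    have hNx : (N:ℝ) ≤ x := Nat.floor_le (by linarith)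
    have hxN : x < (N:ℝ) + 1 := Nat.lt_floor_add_one x
    have hNr1 : (1:ℝ) ≤ (N:ℝ) := by exact_mod_cast hN1
    have hlogx0 : 0 ≤ Real.log x := Real.log_nonneg hx
    have hlogle : Real.log N ≤ Real.log x := Real.log_le_log (by positivity) hNx
    have hlogN0 : 0 ≤ Real.log N := Real.log_natCast_nonneg N
    have hm := mainN l1 l2 h1 h12le N hN1
    have hA0 : 0 ≤ (3 / π ^ 2) * (l2 - l1) := by
      have : (0:ℝ) < π ^ 2 := by positivity
      have h' : (0:ℝ) ≤ 3 / π ^ 2 := by positivity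
      nlinarith
    have hsq : |(3 / π ^ 2) * (l2 - l1) * (N:ℝ)^2 - (3 / π ^ 2) * (l2 - l1) * x^2|
        ≤ 2 * (l2 - l1) * x := by
      rw [← mul_sub, abs_mul, abs_of_nonneg hA0, abs_sub_comm,
        abs_of_nonneg (by nlinarith : (0:ℝ) ≤ x^2 - (N:ℝ)^2)]
      have h2x : x^2 - (N:ℝ)^2 ≤ 2 * x := by nlinarith
      calc (3 / π ^ 2) * (l2 - l1) * (x^2 - (N:ℝ)^2)
          ≤ 1 * (l2 - l1) * (2 * x) := by
            apply mul_le_mul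
            · apply mul_le_mul_of_nonneg_right hpi2 (by linarith)
            · exact h2x
            · nlinarith
            · nlinarith
        _ = 2 * (l2 - l1) * x := by ring
    set T := ∑ n ∈ Finset.Icc 1 N,
        (((Finset.Icc 1 ⌈l2 * n⌉₊).filter
          (fun m => Nat.Coprime m n ∧ l1 * n < m ∧ (m : ℝ) < l2 * n)).card : ℝ) with hT
    have tri : |T - (3 / π ^ 2) * (l2 - l1) * x^2|
        ≤ ((l2 - l1) * (2 * N * (1 + Real.log N)) + N * (1 + Real.log N)) + 2 * (l2 - l1) * x :=
      le_trans (abs_sub_le T ((3 / π ^ 2) * (l2 - l1) * (N:ℝ)^2) ((3 / π ^ 2) * (l2 - l1) * x^2))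
        (add_le_add hm hsq)
    refine le_trans tri ?_
    have e1 : (N:ℝ) * (1 + Real.log N) ≤ x * (1 + Real.log x) := by
      apply mul_le_mul hNx (by linarith) (by linarith) (by linarith)
    have e2 : 2 * (l2 - l1) * x ≤ 2 * (l2 - l1) * (x * (1 + Real.log x)) := by
      have hxx : x ≤ x * (1 + Real.log x) :=
        le_mul_of_one_le_right (by linarith) (by linarith)
      exact mul_le_mul_of_nonneg_left hxx (by linarith)
    have e3 : (l2 - l1) * (2 * N * (1 + Real.log N)) ≤ 2 * (l2 - l1) * (x * (1 + Real.log x)) := by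
      have h' := mul_le_mul_of_nonneg_left e1 (by linarith : (0:ℝ) ≤ 2 * (l2 - l1))
      calc (l2 - l1) * (2 * N * (1 + Real.log N))
          = 2 * (l2 - l1) * ((N:ℝ) * (1 + Real.log N)) := by ring
        _ ≤ 2 * (l2 - l1) * (x * (1 + Real.log x)) := h'
    calc ((l2 - l1) * (2 * N * (1 + Real.log N)) + N * (1 + Real.log N)) + 2 * (l2 - l1) * x
        ≤ (2 * (l2 - l1) * (x * (1 + Real.log x)) + x * (1 + Real.log x))
          + 2 * (l2 - l1) * (x * (1 + Real.log x)) := add_le_add (add_le_add e3 e1) e2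
      _ = C * (x * (1 + Real.log x)) := by rw [hC]; ring
  have h1O : (fun x : ℝ =>
      ((∑ n ∈ Finset.Icc 1 ⌊x⌋₊,
          (((Finset.Icc 1 ⌈l2 * n⌉₊).filter
            (fun m => Nat.Coprime m n ∧ l1 * n < m ∧ (m : ℝ) < l2 * n)).card : ℝ)))
        - (3 / π ^ 2) * (l2 - l1) * x ^ 2)
      =O[atTop] (fun x : ℝ => x * (1 + Real.log x)) := by
    rw [isBigO_iff]
    refine ⟨C, ?_⟩
    filter_upwards [eventually_ge_atTop (1:ℝ)] with x hx
    have hlogx0 : 0 ≤ Real.log x := Real.log_nonneg hx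
    have hpos : 0 ≤ x * (1 + Real.log x) := by nlinarith
    rw [Real.norm_eq_abs, Real.norm_eq_abs, abs_of_nonneg hpos]
    exact hmain x hx
  have h2O : (fun x : ℝ => x * (1 + Real.log x)) =O[atTop] (fun x : ℝ => x * Real.log x) := by
    rw [isBigO_iff]
    refine ⟨2, ?_⟩
    filter_upwards [eventually_ge_atTop (Real.exp 1)] with x hx
    have hx0 : (0:ℝ) < x := lt_of_lt_of_le (Real.exp_pos 1) hx
    have hlog1 : 1 ≤ Real.log x := by
      have := Real.log_le_log (Real.exp_pos 1) hx
      rwa [Real.log_exp] at this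
    rw [Real.norm_eq_abs, Real.norm_eq_abs,
      abs_of_nonneg (by nlinarith : (0:ℝ) ≤ x * (1 + Real.log x)),
      abs_of_nonneg (by nlinarith : (0:ℝ) ≤ x * Real.log x)]
    nlinarith
  exact h1O.trans h2O
end

section
/- For fixed reals 0 ≤ λ₁ < λ₂ and any subset A of the positive rationals (each rational r written uniquely as m/n with gcd(m,n)=1), define S⁰⁰_x(A) = #{m/n ∈ A : n ≤ x, λ₁ < m/n < λ₂} and S⁰¹_x(A) = ∑{1/n : m/n ∈ A, n ≤ x, λ₁ < m/n < λ₂}. Then limsup_{x→∞} S⁰¹_x(A)/S⁰¹_x(ℚ⁺) ≤ limsup_{x→∞} S⁰⁰_x(A)/S⁰⁰_x(ℚ⁺). -/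
open Filter Finset

-- Abel summation identity over range
private lemma abel_identity (a w : ℕ → ℝ) (N : ℕ) :
    ∑ k ∈ range N, a k * w k =
      (∑ k ∈ range N, (∑ j ∈ range (k+1), a j) * (w k - w (k+1)))
        + (∑ j ∈ range N, a j) * w N := by
  induction N with
  | zero => simp
  | succ N ih =>
    rw [sum_range_succ, ih, sum_range_succ (f := fun k => (∑ j ∈ range (k+1), a j) * (w k - w (k+1))),
      sum_range_succ (f := a)]
    ring

private lemma abel_bound (a b : ℕ → ℝ) (c K : ℝ) (hc : 0 ≤ c) (hK : 0 ≤ K)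
    (hb : ∀ n, 0 ≤ ∑ j ∈ range n, b j)
    (h : ∀ n, ∑ j ∈ range n, a j ≤ c * ∑ j ∈ range n, b j + K) (N : ℕ) :
    ∑ k ∈ range N, a k * (1/(k+1) : ℝ) ≤ c * ∑ k ∈ range N, b k * (1/(k+1) : ℝ) + K := by
  set w : ℕ → ℝ := fun k => 1/(k+1) with hw
  have hwpos : ∀ k, 0 < w k := fun k => by positivity
  have hwanti : ∀ k, w (k+1) ≤ w k := by
    intro k
    apply one_div_le_one_div_of_le (by positivity)
    push_cast; linarith
  have htel : (∑ k ∈ range N, (w k - w (k+1))) + w N = w 0 := by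
    rw [sum_range_sub' w N]; ring
  rw [abel_identity a w N, abel_identity b w N]
  have step : ∑ k ∈ range N, (∑ j ∈ range (k+1), a j) * (w k - w (k+1))
      ≤ ∑ k ∈ range N, (c * (∑ j ∈ range (k+1), b j) + K) * (w k - w (k+1)) := by
    apply sum_le_sum
    intro k _
    exact mul_le_mul_of_nonneg_right (h (k+1)) (by linarith [hwanti k])
  have step2 : (∑ j ∈ range N, a j) * w N ≤ (c * (∑ j ∈ range N, b j) + K) * w N :=
    mul_le_mul_of_nonneg_right (h N) (le_of_lt (hwpos N))
  have expand : ∑ k ∈ range N, (c * (∑ j ∈ range (k+1), b j) + K) * (w k - w (k+1))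
        + (c * (∑ j ∈ range N, b j) + K) * w N
      = c * ((∑ k ∈ range N, (∑ j ∈ range (k+1), b j) * (w k - w (k+1)))
          + (∑ j ∈ range N, b j) * w N)
        + K * ((∑ k ∈ range N, (w k - w (k+1))) + w N) := by
    have hterm : ∀ k ∈ range N, (c * (∑ j ∈ range (k+1), b j) + K) * (w k - w (k+1))
        = c * ((∑ j ∈ range (k+1), b j) * (w k - w (k+1))) + K * (w k - w (k+1)) := by
      intros; ring
    rw [sum_congr rfl hterm, Finset.sum_add_distrib, ← Finset.mul_sum, ← Finset.mul_sum]
    ring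
  calc _ ≤ ∑ k ∈ range N, (c * (∑ j ∈ range (k+1), b j) + K) * (w k - w (k+1))
        + (c * (∑ j ∈ range N, b j) + K) * w N := add_le_add step step2
    _ = c * ((∑ k ∈ range N, (∑ j ∈ range (k+1), b j) * (w k - w (k+1)))
          + (∑ j ∈ range N, b j) * w N) + K * ((∑ k ∈ range N, (w k - w (k+1))) + w N) := expand
    _ = _ := by rw [htel]; simp [hw]

private lemma main_seq (a b : ℕ → ℝ) (ha : ∀ n, 0 ≤ a n) (hab : ∀ n, a n ≤ b n)
    (hdiv : Tendsto (fun N => ∑ k ∈ range N, b k * (1/(k+1) : ℝ)) atTop atTop) :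
    limsup (fun N => (∑ k ∈ range N, a k * (1/(k+1):ℝ)) / (∑ k ∈ range N, b k * (1/(k+1):ℝ))) atTop
      ≤ limsup (fun N => (∑ k ∈ range N, a k) / (∑ k ∈ range N, b k)) atTop := by
  have hb : ∀ n, 0 ≤ b n := fun n => le_trans (ha n) (hab n)
  set Ta : ℕ → ℝ := fun N => ∑ k ∈ range N, a k * (1/(k+1):ℝ) with hTa
  set Tb : ℕ → ℝ := fun N => ∑ k ∈ range N, b k * (1/(k+1):ℝ) with hTb
  set Sa : ℕ → ℝ := fun N => ∑ k ∈ range N, a k with hSa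
  set Sb : ℕ → ℝ := fun N => ∑ k ∈ range N, b k with hSb
  have hSa0 : ∀ N, 0 ≤ Sa N := fun N => sum_nonneg fun k _ => ha k
  have hSb0 : ∀ N, 0 ≤ Sb N := fun N => sum_nonneg fun k _ => hb k
  have hSab : ∀ N, Sa N ≤ Sb N := fun N => sum_le_sum fun k _ => hab k
  have hTa0 : ∀ N, 0 ≤ Ta N := fun N => sum_nonneg fun k _ => by
    have := ha k; positivity
  have hTb0 : ∀ N, 0 ≤ Tb N := fun N => sum_nonneg fun k _ => by
    have := hb k; positivity
  have hTab : ∀ N, Ta N ≤ Tb N := fun N => sum_le_sum fun k _ =>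
    mul_le_mul_of_nonneg_right (hab k) (by positivity)
  set f : ℕ → ℝ := fun N => Ta N / Tb N with hf
  set g : ℕ → ℝ := fun N => Sa N / Sb N with hg
  have hf01 : ∀ N, 0 ≤ f N ∧ f N ≤ 1 := fun N =>
    ⟨div_nonneg (hTa0 N) (hTb0 N), div_le_one_of_le₀ (hTab N) (hTb0 N)⟩
  have hg01 : ∀ N, 0 ≤ g N ∧ g N ≤ 1 := fun N =>
    ⟨div_nonneg (hSa0 N) (hSb0 N), div_le_one_of_le₀ (hSab N) (hSb0 N)⟩
  have hgb : IsBoundedUnder (· ≤ ·) atTop g :=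
    isBoundedUnder_of ⟨1, fun N => (hg01 N).2⟩
  have hfb : IsBoundedUnder (· ≤ ·) atTop f :=
    isBoundedUnder_of ⟨1, fun N => (hf01 N).2⟩
  have hfcb : IsCoboundedUnder (· ≤ ·) atTop f :=
    isCoboundedUnder_le_of_le atTop fun N => (hf01 N).1
  set L : ℝ := limsup g atTop with hL
  have hL0 : 0 ≤ L := le_limsup_of_frequently_le
    (Frequently.of_forall fun N => (hg01 N).1) hgb
  refine le_of_forall_pos_le_add fun ε hε => ?_
  -- eventually Sa N ≤ (L + ε/2) * Sb N
  have hev : ∀ᶠ N in atTop, g N < L + ε/2 := by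
    apply eventually_lt_of_limsup_lt _ hgb
    rw [← hL]; linarith
  obtain ⟨M, hM⟩ := hev.exists_forall_of_atTop
  have key : ∀ N, Sa N ≤ (L + ε/2) * Sb N + Sa M := by
    intro N
    rcases le_or_gt M N with h | h
    · have hgN := hM N h
      have : Sa N ≤ (L + ε/2) * Sb N := by
        rcases eq_or_lt_of_le (hSb0 N) with h0 | h0
        · have : Sa N = 0 := le_antisymm (le_trans (hSab N) h0.symm.le) (hSa0 N)
          rw [this, ← h0]; simp
        · rw [hg, div_lt_iff₀ h0] at hgN
          exact le_of_lt hgN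
      linarith [hSa0 M]
    · have hmono : Sa N ≤ Sa M := by
        apply sum_le_sum_of_subset_of_nonneg
        · exact range_subset_range.mpr (le_of_lt h)
        · intro k _ _; exact ha k
      have : 0 ≤ (L + ε/2) * Sb N := mul_nonneg (by linarith) (hSb0 N)
      linarith
  have habel := abel_bound a b (L + ε/2) (Sa M) (by linarith) (hSa0 M) hSb0 key
  -- eventually Tb N large
  have hevTb : ∀ᶠ N in atTop, max 1 (2 * Sa M / ε) ≤ Tb N := hdiv.eventually_ge_atTop _
  have hfinal : ∀ᶠ N in atTop, f N ≤ L + ε := by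
    filter_upwards [hevTb] with N hN
    have hTbpos : (0:ℝ) < Tb N := lt_of_lt_of_le one_pos (le_trans (le_max_left _ _) hN)
    have h1 : f N ≤ ((L + ε/2) * Tb N + Sa M) / Tb N := by
      rw [hf]
      exact (div_le_div_iff_of_pos_right hTbpos).mpr (habel N)
    have h2 : ((L + ε/2) * Tb N + Sa M) / Tb N = (L + ε/2) + Sa M / Tb N := by
      field_simp
    have h3 : Sa M / Tb N ≤ ε/2 := by
      rw [div_le_iff₀ hTbpos]
      have : 2 * Sa M / ε ≤ Tb N := le_trans (le_max_right _ _) hN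
      rw [div_le_iff₀ hε] at this
      linarith
    rw [h2] at h1; linarith
  exact limsup_le_of_le hfcb hfinal

private lemma prime_has_frac (l1 l2 : ℝ) (h1 : 0 ≤ l1) (h12 : l1 < l2) {p : ℕ} (hp : p.Prime)
    (hP : 2 / (l2 - l1) < (p : ℝ)) :
    ∃ m : ℕ, m ∈ Finset.Icc 1 ⌈l2 * p⌉₊ ∧ Nat.Coprime m p ∧ l1 < (m : ℝ) / p ∧
      (m : ℝ) / p < l2 ∧ (0 : ℚ) < (m : ℚ) / p := by
  have hppos : (0 : ℝ) < p := by exact_mod_cast hp.pos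
  have hll : (0:ℝ) < l2 - l1 := by linarith
  have h2 : l1 * p + 2 < l2 * p := by
    rw [div_lt_iff₀ hll] at hP
    nlinarith
  set m0 : ℕ := ⌊l1 * p⌋₊ + 1 with hm0
  have hm0lb : l1 * p < m0 := by
    have := Nat.lt_floor_add_one (l1 * p)
    push_cast [hm0]
    exact this
  have hm0ub : (m0 : ℝ) ≤ l1 * p + 1 := by
    have := Nat.floor_le (by positivity : (0:ℝ) ≤ l1 * p)
    push_cast [hm0]
    linarith
  set m : ℕ := if p ∣ m0 then m0 + 1 else m0 with hm
  have hmnd : ¬ (p ∣ m) := by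
    rw [hm]
    split_ifs with hd
    · intro hd2
      have h1' : p ∣ 1 := by
        have := Nat.dvd_sub hd2 hd
        simpa using this
      exact hp.one_lt.ne' (Nat.dvd_one.mp h1')
    · exact hd
  have hmlb : l1 * p < m := by
    have : m0 ≤ m := by rw [hm]; split_ifs <;> omega
    have : (m0:ℝ) ≤ m := by exact_mod_cast this
    linarith
  have hmub : (m:ℝ) < l2 * p := by
    have : m ≤ m0 + 1 := by rw [hm]; split_ifs <;> omega
    have : (m:ℝ) ≤ (m0:ℝ) + 1 := by exact_mod_cast this
    linarith
  have hm1 : 1 ≤ m := by rw [hm]; split_ifs <;> omega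
  have hmceil : m ≤ ⌈l2 * p⌉₊ := by
    have h' : (m:ℝ) ≤ (⌈l2 * p⌉₊ : ℝ) := le_trans hmub.le (Nat.le_ceil _)
    exact_mod_cast h'
  refine ⟨m, Finset.mem_Icc.mpr ⟨hm1, hmceil⟩, (Nat.Prime.coprime_iff_not_dvd hp |>.mpr hmnd).symm,
    ?_, ?_, ?_⟩
  · rw [lt_div_iff₀ hppos]; linarith
  · rw [div_lt_iff₀ hppos]; linarith
  · apply div_pos
    · exact_mod_cast hm1
    · exact_mod_cast hp.pos

private lemma div_lemma (C : ℝ) (b : ℕ → ℝ) (hb0 : ∀ k, 0 ≤ b k)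
    (hb1 : ∀ k : ℕ, (k+1).Prime → C < ((k:ℝ)+1) → 1 ≤ b k) :
    Tendsto (fun N => ∑ k ∈ range N, b k * (1/(k+1) : ℝ)) atTop atTop := by
  classical
  set P0 : ℕ := ⌈C⌉₊ + 1 with hP0
  have hP0C : ∀ n : ℕ, P0 ≤ n → C < (n:ℝ) := by
    intro n hn
    have h1 : C ≤ (⌈C⌉₊ : ℝ) := Nat.le_ceil C
    have h2 : ((P0:ℕ):ℝ) ≤ (n:ℝ) := by exact_mod_cast hn
    push_cast [hP0] at h2
    linarith
  set h : ℕ → ℝ := fun n => if n.Prime ∧ P0 ≤ n then 1/(n:ℝ) else 0 with hh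
  have hpos : ∀ n, 0 ≤ h n := by
    intro n; rw [hh]; dsimp only; split_ifs with hc
    · positivity
    · exact le_refl 0
  have hle : ∀ k : ℕ, h (k+1) ≤ b k * (1/(k+1) : ℝ) := by
    intro k
    rw [hh]; dsimp only; split_ifs with hc
    · have hb := hb1 k hc.1 (by
        have := hP0C (k+1) hc.2
        push_cast at this ⊢
        linarith)
      have hw : (0:ℝ) < 1/((k:ℝ)+1) := by positivity
      calc (1:ℝ)/((k+1:ℕ):ℝ) = 1/((k:ℝ)+1) := by push_cast; ring
        _ = 1 * (1/((k:ℝ)+1)) := (one_mul _).symm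
        _ ≤ b k * (1/((k:ℝ)+1)) := mul_le_mul_of_nonneg_right hb hw.le
    · have := hb0 k
      positivity
  have hnotsum : ¬ Summable (fun k : ℕ => h (k+1)) := by
    intro hs
    have hsh : Summable h := (summable_nat_add_iff 1).mp hs
    set e : ℕ → ℝ := fun n => if n.Prime ∧ n < P0 then 1/(n:ℝ) else 0 with he
    have hse : Summable e := by
      apply summable_of_ne_finset_zero (s := range P0)
      intro n hn
      rw [mem_range, not_lt] at hn
      rw [he]; dsimp only
      rw [if_neg]
      rintro ⟨-, h2⟩
      omega
    have heq : Set.indicator {p : ℕ | p.Prime} (fun n : ℕ => (1:ℝ)/n) = fun n => h n + e n := by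
      funext n
      rw [Set.indicator_apply]
      rw [hh, he]; dsimp only
      simp only [Set.mem_setOf_eq]
      by_cases h1 : n.Prime
      · by_cases h2 : P0 ≤ n
        · rw [if_pos h1, if_pos ⟨h1, h2⟩, if_neg (by omega), add_zero]
        · rw [if_pos h1, if_neg (by tauto), if_pos ⟨h1, by omega⟩, zero_add]
      · rw [if_neg h1, if_neg (by tauto), if_neg (by tauto), add_zero]
    exact not_summable_one_div_on_primes (heq ▸ hsh.add hse)
  have htend := (not_summable_iff_tendsto_nat_atTop_of_nonneg (fun k => hpos (k+1))).mp hnotsum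
  apply tendsto_atTop_mono _ htend
  intro N
  exact sum_le_sum fun k _ => hle k

private lemma map_floor_atTop : Filter.map (Nat.floor : ℝ → ℕ) atTop = atTop := by
  apply le_antisymm
  · exact tendsto_nat_floor_atTop
  · have h1 : (fun n : ℕ => ⌊((n:ℝ))⌋₊) = id := funext fun n => Nat.floor_natCast n
    calc (atTop : Filter ℕ) = Filter.map (fun n : ℕ => ⌊((n:ℝ))⌋₊) atTop := by
          rw [h1, Filter.map_id]
      _ = Filter.map Nat.floor (Filter.map (Nat.cast : ℕ → ℝ) atTop) := by
          rw [Filter.map_map]; rfl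
      _ ≤ Filter.map Nat.floor atTop := Filter.map_mono tendsto_natCast_atTop_atTop

open Classical in
theorem stmt_11 (l1 l2 : ℝ) (h1 : 0 ≤ l1) (h12 : l1 < l2) (A : Set ℚ)
    (hA : A ⊆ {r : ℚ | 0 < r}) :
    let S00 : Set ℚ → ℝ → ℝ := fun B x =>
      ∑ n ∈ Finset.Icc 1 ⌊x⌋₊, ∑ m ∈ Finset.Icc 1 ⌈l2 * n⌉₊,
        if Nat.Coprime m n ∧ l1 < (m : ℝ) / n ∧ (m : ℝ) / n < l2 ∧ ((m : ℚ) / n) ∈ B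
        then (1 : ℝ) else 0
    let S01 : Set ℚ → ℝ → ℝ := fun B x =>
      ∑ n ∈ Finset.Icc 1 ⌊x⌋₊, ∑ m ∈ Finset.Icc 1 ⌈l2 * n⌉₊,
        if Nat.Coprime m n ∧ l1 < (m : ℝ) / n ∧ (m : ℝ) / n < l2 ∧ ((m : ℚ) / n) ∈ B
        then (1 : ℝ) / n else 0
    limsup (fun x => S01 A x / S01 {r : ℚ | 0 < r} x) atTop ≤
      limsup (fun x => S00 A x / S00 {r : ℚ | 0 < r} x) atTop := by
  intro S00 S01
  set Q : Set ℚ := {r : ℚ | 0 < r} with hQ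
  set c : Set ℚ → ℕ → ℝ := fun B n => ∑ m ∈ Finset.Icc 1 ⌈l2 * n⌉₊,
      if Nat.Coprime m n ∧ l1 < (m : ℝ) / n ∧ (m : ℝ) / n < l2 ∧ ((m : ℚ) / n) ∈ B
      then (1 : ℝ) else 0 with hc
  have shift : ∀ (f : ℕ → ℝ) (N : ℕ), ∑ n ∈ Finset.Icc 1 N, f n = ∑ k ∈ Finset.range N, f (k+1) := by
    intro f N
    rw [← Finset.Ico_add_one_right_eq_Icc, Finset.sum_Ico_eq_sum_range]
    simp [add_comm]
  have hS00 : ∀ B x, S00 B x = ∑ k ∈ Finset.range ⌊x⌋₊, c B (k+1) := by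
    intro B x
    exact shift (fun n => c B n) ⌊x⌋₊
  have hS01 : ∀ B x, S01 B x = ∑ k ∈ Finset.range ⌊x⌋₊, c B (k+1) * (1/((k:ℝ)+1)) := by
    intro B x
    have inner : ∀ n : ℕ, (∑ m ∈ Finset.Icc 1 ⌈l2 * n⌉₊,
        if Nat.Coprime m n ∧ l1 < (m : ℝ) / n ∧ (m : ℝ) / n < l2 ∧ ((m : ℚ) / n) ∈ B
        then (1 : ℝ) / n else 0) = c B n * (1/(n:ℝ)) := by
      intro n
      rw [hc]
      dsimp only
      rw [Finset.sum_mul]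
      apply Finset.sum_congr rfl
      intro m _
      split_ifs <;> simp
    have : S01 B x = ∑ n ∈ Finset.Icc 1 ⌊x⌋₊, c B n * (1/(n:ℝ)) := by
      apply Finset.sum_congr rfl
      intro n _
      exact inner n
    rw [this, shift (fun n => c B n * (1/(n:ℝ))) ⌊x⌋₊]
    apply Finset.sum_congr rfl
    intro k _
    push_cast
    ring_nf
  set a : ℕ → ℝ := fun k => c A (k+1) with ha'
  set b : ℕ → ℝ := fun k => c Q (k+1) with hb'
  have ha : ∀ k, 0 ≤ a k := by
    intro k
    apply Finset.sum_nonneg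
    intro m _
    split_ifs <;> norm_num
  have hab : ∀ k, a k ≤ b k := by
    intro k
    apply Finset.sum_le_sum
    intro m _
    split_ifs with hx hy
    · exact le_refl _
    · exact absurd ⟨hx.1, hx.2.1, hx.2.2.1, hA hx.2.2.2⟩ hy
    all_goals norm_num
  have hb1 : ∀ k : ℕ, (k+1).Prime → 2/(l2-l1) < ((k:ℝ)+1) → 1 ≤ b k := by
    intro k hp hC
    obtain ⟨m, hmem, hcop, hl1, hl2, hpos⟩ := prime_has_frac l1 l2 h1 h12 hp (by push_cast; linarith)
    rw [hb', hc]
    dsimp only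
    refine le_trans ?_ (Finset.single_le_sum (fun i _ => ?_) hmem)
    · rw [if_pos ⟨hcop, hl1, hl2, by rw [hQ]; simpa using hpos⟩]
    · split_ifs <;> norm_num
  have hdiv := div_lemma (2/(l2-l1)) b (fun k => le_trans (ha k) (hab k)) hb1
  have e0 : (fun x : ℝ => S00 A x / S00 Q x)
      = (fun N : ℕ => (∑ k ∈ range N, a k) / (∑ k ∈ range N, b k)) ∘ Nat.floor := by
    funext x
    simp only [Function.comp_apply, hS00]
    rfl
  have e1 : (fun x : ℝ => S01 A x / S01 Q x)
      = (fun N : ℕ => (∑ k ∈ range N, a k * (1/(k+1):ℝ)) /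
          (∑ k ∈ range N, b k * (1/(k+1):ℝ))) ∘ Nat.floor := by
    funext x
    simp only [Function.comp_apply, hS01]
    rfl
  rw [e0, e1, limsup_comp, limsup_comp, map_floor_atTop]
  exact main_seq a b ha hab hdiv
end

section
/- Heilbronn–Rohrbach-type inequality (Theorem 4): Let A, B ⊆ ℕ be finite sets such that gcd(a,b) = 1 for all a ∈ A, b ∈ B, and such that for all a₁, a₂ ∈ A one has gcd(a₁, a₂/gcd(a₁,a₂)) = 1, and similarly for B. Let ν(M(A,B|q)) be the common density of the set of rational multiples M(A,B|q) (which exists by Theorem 3). Then 1 - ν(M(A,B|q)) ≥ ∏_{p|q}(1 - 2/(p+1))·∏_{c ∈ A∪B}(1 - (1/c)·∏_{p|c}(1 - 1/(p+1))). -/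
open Finset

private noncomputable def Xi {ι : Type*} [DecidableEq ι] (X : Finset ι)
    (supp : ι → Finset ℕ) (g : ℕ → ℝ) : ℝ :=
  ∑ S ∈ X.powerset, (-1 : ℝ) ^ S.card * ∏ p ∈ S.biUnion supp, g p

private lemma Xi_congr {ι : Type*} [DecidableEq ι] {X : Finset ι}
    {supp supp' : ι → Finset ℕ} (g : ℕ → ℝ) (h : ∀ a ∈ X, supp a = supp' a) :
    Xi X supp g = Xi X supp' g := by
  unfold Xi
  refine Finset.sum_congr rfl fun S hS => ?_
  have hSX := Finset.mem_powerset.1 hS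
  rw [Finset.biUnion_congr rfl (fun a ha => h a (hSX ha))]

private lemma biUnion_erase_eq {ι : Type*} [DecidableEq ι] (S : Finset ι)
    (supp : ι → Finset ℕ) (p₀ : ℕ) :
    (S.biUnion fun a => (supp a).erase p₀) = (S.biUnion supp).erase p₀ := by
  ext x
  simp only [Finset.mem_biUnion, Finset.mem_erase]
  tauto

private lemma Xi_rec {ι : Type*} [DecidableEq ι] (X : Finset ι)
    (supp : ι → Finset ℕ) (g : ℕ → ℝ) (p₀ : ℕ) :
    Xi X supp g = g p₀ * Xi X (fun a => (supp a).erase p₀) g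
      + (1 - g p₀) * Xi (X.filter (fun a => p₀ ∉ supp a)) supp g := by
  classical
  have hpow : (X.filter (fun a => p₀ ∉ supp a)).powerset
      = X.powerset.filter (fun S => p₀ ∉ S.biUnion supp) := by
    ext S
    simp only [Finset.mem_powerset, Finset.mem_filter, Finset.subset_iff,
      Finset.mem_biUnion]
    constructor
    · intro h
      refine ⟨fun {x} hx => (h hx).1, ?_⟩
      rintro ⟨a, haS, hpa⟩
      exact (h haS).2 hpa
    · rintro ⟨h1, h2⟩ x hx
      exact ⟨h1 hx, fun hpa => h2 ⟨x, hx, hpa⟩⟩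
  have hsplit := Finset.sum_filter_add_sum_filter_not X.powerset
    (fun S => p₀ ∉ S.biUnion supp)
    (fun S => (-1:ℝ)^S.card * ∏ p ∈ S.biUnion supp, g p)
  have hsplit' := Finset.sum_filter_add_sum_filter_not X.powerset
    (fun S => p₀ ∉ S.biUnion supp)
    (fun S => (-1:ℝ)^S.card * ∏ p ∈ S.biUnion (fun a => (supp a).erase p₀), g p)
  have h1 : ∑ S ∈ X.powerset.filter (fun S => p₀ ∉ S.biUnion supp),
        (-1:ℝ)^S.card * ∏ p ∈ S.biUnion (fun a => (supp a).erase p₀), g p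
      = ∑ S ∈ X.powerset.filter (fun S => p₀ ∉ S.biUnion supp),
        (-1:ℝ)^S.card * ∏ p ∈ S.biUnion supp, g p := by
    refine Finset.sum_congr rfl fun S hS => ?_
    rw [biUnion_erase_eq, Finset.erase_eq_of_notMem (Finset.mem_filter.1 hS).2]
  have h2 : ∑ S ∈ X.powerset.filter (fun S => ¬ p₀ ∉ S.biUnion supp),
        (-1:ℝ)^S.card * ∏ p ∈ S.biUnion supp, g p
      = g p₀ * ∑ S ∈ X.powerset.filter (fun S => ¬ p₀ ∉ S.biUnion supp),
        (-1:ℝ)^S.card * ∏ p ∈ S.biUnion (fun a => (supp a).erase p₀), g p := by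
    rw [Finset.mul_sum]
    refine Finset.sum_congr rfl fun S hS => ?_
    have hp : p₀ ∈ S.biUnion supp := not_not.1 (Finset.mem_filter.1 hS).2
    rw [biUnion_erase_eq, ← Finset.mul_prod_erase _ _ hp]
    ring
  unfold Xi
  rw [hpow, ← hsplit, ← hsplit', h2, h1]
  ring

private lemma helper_ineq {ι : Type*} {g : ℝ} (hg0 : 0 ≤ g) (hg1 : g ≤ 1)
    (s : Finset ι) (x : ι → ℝ) (hx : ∀ a ∈ s, 0 ≤ x a ∧ x a ≤ 1) :
    ∏ a ∈ s, (1 - g * x a) ≤ g * ∏ a ∈ s, (1 - x a) + (1 - g) := by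
  classical
  induction s using Finset.induction_on with
  | empty => simp
  | @insert j s hj ih =>
    have hxj := hx j (Finset.mem_insert_self j s)
    have hx' : ∀ a ∈ s, 0 ≤ x a ∧ x a ≤ 1 := fun a ha => hx a (Finset.mem_insert_of_mem ha)
    have ihs := ih hx'
    have hP0 : (0:ℝ) ≤ ∏ a ∈ s, (1 - x a) :=
      Finset.prod_nonneg fun a ha => by linarith [(hx' a ha).2]
    have hP1 : ∏ a ∈ s, (1 - x a) ≤ 1 :=
      Finset.prod_le_one (fun a ha => by linarith [(hx' a ha).2])
        (fun a ha => by linarith [(hx' a ha).1])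
    have hfj : (0:ℝ) ≤ 1 - g * x j := by nlinarith [hxj.1, hxj.2]
    have hmul := mul_le_mul_of_nonneg_left ihs hfj
    have hcov : (0:ℝ) ≤ g * x j * (1 - g) * (1 - ∏ a ∈ s, (1 - x a)) := by
      have := mul_nonneg (mul_nonneg (mul_nonneg hg0 hxj.1) (by linarith : (0:ℝ) ≤ 1 - g))
        (by linarith : (0:ℝ) ≤ 1 - ∏ a ∈ s, (1 - x a))
      linarith
    rw [Finset.prod_insert hj, Finset.prod_insert hj]
    nlinarith [hmul, hcov]

private lemma Xi_of_empty_supp {ι : Type*} [DecidableEq ι] {X : Finset ι}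
    {supp : ι → Finset ℕ} (g : ℕ → ℝ) (h : ∀ a ∈ X, supp a = ∅) :
    Xi X supp g = if X = ∅ then 1 else 0 := by
  unfold Xi
  have hterm : ∀ S ∈ X.powerset, (-1:ℝ)^S.card * ∏ p ∈ S.biUnion supp, g p
      = (-1:ℝ)^S.card := by
    intro S hS
    have hSX := Finset.mem_powerset.1 hS
    have : S.biUnion supp = ∅ := by
      rw [Finset.eq_empty_iff_forall_notMem]
      intro p hp
      obtain ⟨a, ha, hpa⟩ := Finset.mem_biUnion.1 hp
      rw [h a (hSX ha)] at hpa
      exact absurd hpa (Finset.notMem_empty p)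
    rw [this, Finset.prod_empty, mul_one]
  rw [Finset.sum_congr rfl hterm]
  have h2 : (∑ S ∈ X.powerset, (-1:ℝ)^S.card)
      = (((∑ S ∈ X.powerset, (-1:ℤ)^S.card : ℤ)) : ℝ) := by push_cast; rfl
  rw [h2, Finset.sum_powerset_neg_one_pow_card]
  split <;> simp

private lemma Xi_bounds {ι : Type*} [DecidableEq ι] (g : ℕ → ℝ)
    (hg : ∀ p, 0 ≤ g p ∧ g p ≤ 1) :
    ∀ n : ℕ, ∀ (X : Finset ι) (supp : ι → Finset ℕ), (X.biUnion supp).card ≤ n →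
      (∏ a ∈ X, (1 - ∏ p ∈ supp a, g p)) ≤ Xi X supp g ∧ Xi X supp g ≤ 1 := by
  intro n
  induction n with
  | zero =>
    intro X supp hcard
    have hUe : X.biUnion supp = ∅ := Finset.card_eq_zero.1 (Nat.le_zero.1 hcard)
    have hemp : ∀ a ∈ X, supp a = ∅ := by
      intro a ha
      rw [Finset.eq_empty_iff_forall_notMem]
      intro p hp
      exact (Finset.eq_empty_iff_forall_notMem.1 hUe p) (Finset.mem_biUnion.2 ⟨a, ha, hp⟩)
    rw [Xi_of_empty_supp g hemp]
    constructor
    · split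
      · next hX => simp [hX]
      · next hX =>
        obtain ⟨a, ha⟩ := Finset.nonempty_iff_ne_empty.2 hX
        have : ∏ a ∈ X, (1 - ∏ p ∈ supp a, g p) = 0 := by
          refine Finset.prod_eq_zero ha ?_
          rw [hemp a ha]; simp
        rw [this]
    · split <;> norm_num
  | succ n ih =>
    intro X supp hcard
    by_cases hU : X.biUnion supp = ∅
    · exact ih X supp (by simp [hU])
    · obtain ⟨p₀, hp₀⟩ := Finset.nonempty_iff_ne_empty.2 hU
      obtain ⟨hg0, hg1⟩ := hg p₀
      have m1 : (X.biUnion (fun a => (supp a).erase p₀)).card ≤ n := by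
        rw [biUnion_erase_eq, Finset.card_erase_of_mem hp₀]
        omega
      have m2 : ((X.filter (fun a => p₀ ∉ supp a)).biUnion supp).card ≤ n := by
        have hsub : (X.filter (fun a => p₀ ∉ supp a)).biUnion supp
            ⊆ (X.biUnion supp).erase p₀ := by
          intro p hp
          obtain ⟨a, ha, hpa⟩ := Finset.mem_biUnion.1 hp
          obtain ⟨haX, hnp⟩ := Finset.mem_filter.1 ha
          refine Finset.mem_erase.2 ⟨?_, Finset.mem_biUnion.2 ⟨a, haX, hpa⟩⟩
          rintro rfl; exact hnp hpa
        calc ((X.filter (fun a => p₀ ∉ supp a)).biUnion supp).card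
            ≤ ((X.biUnion supp).erase p₀).card := Finset.card_le_card hsub
          _ ≤ n := by rw [Finset.card_erase_of_mem hp₀]; omega
      obtain ⟨L1, U1⟩ := ih X (fun a => (supp a).erase p₀) m1
      obtain ⟨L2, U2⟩ := ih (X.filter (fun a => p₀ ∉ supp a)) supp m2
      have hrec := Xi_rec X supp g p₀
      have hπ01 : ∀ (t : Finset ℕ), 0 ≤ ∏ p ∈ t, g p ∧ ∏ p ∈ t, g p ≤ 1 := fun t =>
        ⟨Finset.prod_nonneg fun p _ => (hg p).1,
         Finset.prod_le_one (fun p _ => (hg p).1) (fun p _ => (hg p).2)⟩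
      have hQ0 : (0:ℝ) ≤ ∏ a ∈ X.filter (fun a => p₀ ∉ supp a), (1 - ∏ p ∈ supp a, g p) :=
        Finset.prod_nonneg fun a _ => by linarith [(hπ01 (supp a)).2]
      constructor
      · -- lower bound
        have hsplitL1 : ∏ a ∈ X, (1 - ∏ p ∈ (supp a).erase p₀, g p)
            = (∏ a ∈ X.filter (fun a => p₀ ∉ supp a), (1 - ∏ p ∈ supp a, g p))
              * ∏ a ∈ X.filter (fun a => ¬ p₀ ∉ supp a), (1 - ∏ p ∈ (supp a).erase p₀, g p) := by
          rw [← Finset.prod_filter_mul_prod_filter_not X (fun a => p₀ ∉ supp a)]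
          congr 1
          refine Finset.prod_congr rfl fun a ha => ?_
          rw [Finset.erase_eq_of_notMem (Finset.mem_filter.1 ha).2]
        have hhelp := helper_ineq hg0 hg1 (X.filter (fun a => ¬ p₀ ∉ supp a))
          (fun a => ∏ p ∈ (supp a).erase p₀, g p)
          (fun a _ => hπ01 ((supp a).erase p₀))
        have hpi : ∀ a ∈ X.filter (fun a => ¬ p₀ ∉ supp a),
            (1 - g p₀ * ∏ p ∈ (supp a).erase p₀, g p) = 1 - ∏ p ∈ supp a, g p := by
          intro a ha
          have hmem : p₀ ∈ supp a := not_not.1 (Finset.mem_filter.1 ha).2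
          rw [Finset.mul_prod_erase _ _ hmem]
        have key : ∏ a ∈ X, (1 - ∏ p ∈ supp a, g p)
            = (∏ a ∈ X.filter (fun a => p₀ ∉ supp a), (1 - ∏ p ∈ supp a, g p))
              * ∏ a ∈ X.filter (fun a => ¬ p₀ ∉ supp a), (1 - g p₀ * ∏ p ∈ (supp a).erase p₀, g p) := by
          rw [Finset.prod_congr rfl hpi,
            Finset.prod_filter_mul_prod_filter_not X (fun a => p₀ ∉ supp a)]
        rw [key, hrec]
        have hL1' : (∏ a ∈ X.filter (fun a => p₀ ∉ supp a), (1 - ∏ p ∈ supp a, g p))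
            * ∏ a ∈ X.filter (fun a => ¬ p₀ ∉ supp a), (1 - ∏ p ∈ (supp a).erase p₀, g p)
            ≤ Xi X (fun a => (supp a).erase p₀) g := by rw [← hsplitL1]; exact L1
        have step1 := mul_le_mul_of_nonneg_left hhelp hQ0
        nlinarith [step1, hL1', L2, hQ0, hg0, hg1]
      · rw [hrec]
        nlinarith [U1, U2]

private lemma Xi_pair_ge (g : ℕ → ℝ) (hg : ∀ p, 0 ≤ g p ∧ g p ≤ 1) :
    ∀ n : ℕ, ∀ (A B : Finset ℕ) (sA sB : ℕ → Finset ℕ),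
      Disjoint (A.biUnion sA) (B.biUnion sB) →
      (A.biUnion sA ∪ B.biUnion sB).card ≤ n →
      Xi A sA g ≤ Xi (A ×ˢ B) (fun x => sA x.1 ∪ sB x.2) g := by
  have hbase : ∀ (A B : Finset ℕ) (sA sB : ℕ → Finset ℕ),
      A.biUnion sA = ∅ → B.biUnion sB = ∅ →
      Xi A sA g ≤ Xi (A ×ˢ B) (fun x => sA x.1 ∪ sB x.2) g := by
    intro A B sA sB hA hB
    have hsA : ∀ a ∈ A, sA a = ∅ := by
      intro a ha
      rw [Finset.eq_empty_iff_forall_notMem]; intro p hp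
      exact (Finset.eq_empty_iff_forall_notMem.1 hA p) (Finset.mem_biUnion.2 ⟨a, ha, hp⟩)
    have hsB : ∀ b ∈ B, sB b = ∅ := by
      intro b hb
      rw [Finset.eq_empty_iff_forall_notMem]; intro p hp
      exact (Finset.eq_empty_iff_forall_notMem.1 hB p) (Finset.mem_biUnion.2 ⟨b, hb, hp⟩)
    have hPair : ∀ x ∈ A ×ˢ B, sA x.1 ∪ sB x.2 = ∅ := by
      intro x hx
      obtain ⟨h1, h2⟩ := Finset.mem_product.1 hx
      rw [hsA _ h1, hsB _ h2]; simp
    rw [Xi_of_empty_supp g hsA, Xi_of_empty_supp g hPair]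
    by_cases hAe : A = ∅
    · subst hAe
      rw [if_pos rfl, if_pos (by rw [Finset.empty_product])]
    · rw [if_neg hAe]
      split <;> norm_num
  intro n
  induction n with
  | zero =>
    intro A B sA sB hdisj hcard
    have hU : A.biUnion sA ∪ B.biUnion sB = ∅ := Finset.card_eq_zero.1 (Nat.le_zero.1 hcard)
    rw [Finset.union_eq_empty] at hU
    exact hbase A B sA sB hU.1 hU.2
  | succ n ih =>
    intro A B sA sB hdisj hcard
    by_cases hU : A.biUnion sA ∪ B.biUnion sB = ∅
    · rw [Finset.union_eq_empty] at hU
      exact hbase A B sA sB hU.1 hU.2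
    · obtain ⟨p₀, hp₀⟩ := Finset.nonempty_iff_ne_empty.2 hU
      obtain ⟨hg0, hg1⟩ := hg p₀
      have hrecP := Xi_rec (A ×ˢ B) (fun x => sA x.1 ∪ sB x.2) g p₀
      rcases Finset.mem_union.1 hp₀ with hpA | hpB
      · -- p₀ is an A-side prime
        have hp₀B : p₀ ∉ B.biUnion sB := Finset.disjoint_left.1 hdisj hpA
        have hnotB : ∀ b ∈ B, p₀ ∉ sB b := fun b hb h =>
          hp₀B (Finset.mem_biUnion.2 ⟨b, hb, h⟩)
        have hcongr : Xi (A ×ˢ B) (fun x => (sA x.1 ∪ sB x.2).erase p₀) g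
            = Xi (A ×ˢ B) (fun x => (sA x.1).erase p₀ ∪ sB x.2) g := by
          refine Xi_congr g fun x hx => ?_
          rw [Finset.erase_union_distrib,
            Finset.erase_eq_of_notMem (hnotB _ (Finset.mem_product.1 hx).2)]
        have hfilter : (A ×ˢ B).filter (fun x => p₀ ∉ sA x.1 ∪ sB x.2)
            = (A.filter (fun a => p₀ ∉ sA a)) ×ˢ B := by
          ext x
          simp only [Finset.mem_filter, Finset.mem_product, Finset.mem_union, not_or]
          constructor
          · rintro ⟨⟨h1, h2⟩, h3, h4⟩; exact ⟨⟨h1, h3⟩, h2⟩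
          · rintro ⟨⟨h1, h3⟩, h2⟩; exact ⟨⟨h1, h2⟩, h3, hnotB _ h2⟩
        have hsub1 : A.biUnion (fun a => (sA a).erase p₀) ∪ B.biUnion sB
            ⊆ (A.biUnion sA ∪ B.biUnion sB).erase p₀ := by
          intro p hp
          rcases Finset.mem_union.1 hp with h | h
          · rw [biUnion_erase_eq] at h
            exact Finset.mem_erase.2 ⟨(Finset.mem_erase.1 h).1,
              Finset.mem_union_left _ (Finset.mem_erase.1 h).2⟩
          · refine Finset.mem_erase.2 ⟨?_, Finset.mem_union_right _ h⟩
            rintro rfl; exact hp₀B h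
        have hsub2 : (A.filter (fun a => p₀ ∉ sA a)).biUnion sA ∪ B.biUnion sB
            ⊆ (A.biUnion sA ∪ B.biUnion sB).erase p₀ := by
          intro p hp
          rcases Finset.mem_union.1 hp with h | h
          · obtain ⟨a, ha, hpa⟩ := Finset.mem_biUnion.1 h
            obtain ⟨haA, hnp⟩ := Finset.mem_filter.1 ha
            refine Finset.mem_erase.2 ⟨?_, Finset.mem_union_left _ (Finset.mem_biUnion.2 ⟨a, haA, hpa⟩)⟩
            rintro rfl; exact hnp hpa
          · refine Finset.mem_erase.2 ⟨?_, Finset.mem_union_right _ h⟩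
            rintro rfl; exact hp₀B h
        have hcard' : ((A.biUnion sA ∪ B.biUnion sB).erase p₀).card ≤ n := by
          rw [Finset.card_erase_of_mem hp₀]; omega
        have hd1 : Disjoint (A.biUnion (fun a => (sA a).erase p₀)) (B.biUnion sB) := by
          refine Disjoint.mono_left ?_ hdisj
          rw [biUnion_erase_eq]; exact Finset.erase_subset _ _
        have hd2 : Disjoint ((A.filter (fun a => p₀ ∉ sA a)).biUnion sA) (B.biUnion sB) := by
          refine Disjoint.mono_left ?_ hdisj
          intro p hp
          obtain ⟨a, ha, hpa⟩ := Finset.mem_biUnion.1 hp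
          exact Finset.mem_biUnion.2 ⟨a, (Finset.mem_filter.1 ha).1, hpa⟩
        have IH1 := ih A B (fun a => (sA a).erase p₀) sB hd1
          (le_trans (Finset.card_le_card hsub1) hcard')
        have IH2 := ih (A.filter (fun a => p₀ ∉ sA a)) B sA sB hd2
          (le_trans (Finset.card_le_card hsub2) hcard')
        have hrecA := Xi_rec A sA g p₀
        rw [hrecP, hcongr, hfilter, hrecA]
        nlinarith [IH1, IH2]
      · -- p₀ is a B-side prime
        have hp₀A : p₀ ∉ A.biUnion sA := Finset.disjoint_right.1 hdisj hpB
        have hnotA : ∀ a ∈ A, p₀ ∉ sA a := fun a ha h =>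
          hp₀A (Finset.mem_biUnion.2 ⟨a, ha, h⟩)
        have hcongr : Xi (A ×ˢ B) (fun x => (sA x.1 ∪ sB x.2).erase p₀) g
            = Xi (A ×ˢ B) (fun x => sA x.1 ∪ (sB x.2).erase p₀) g := by
          refine Xi_congr g fun x hx => ?_
          rw [Finset.erase_union_distrib,
            Finset.erase_eq_of_notMem (hnotA _ (Finset.mem_product.1 hx).1)]
        have hfilter : (A ×ˢ B).filter (fun x => p₀ ∉ sA x.1 ∪ sB x.2)
            = A ×ˢ (B.filter (fun b => p₀ ∉ sB b)) := by
          ext x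
          simp only [Finset.mem_filter, Finset.mem_product, Finset.mem_union, not_or]
          constructor
          · rintro ⟨⟨h1, h2⟩, h3, h4⟩; exact ⟨h1, h2, h4⟩
          · rintro ⟨h1, h2, h4⟩; exact ⟨⟨h1, h2⟩, hnotA _ h1, h4⟩
        have hsub1 : A.biUnion sA ∪ B.biUnion (fun b => (sB b).erase p₀)
            ⊆ (A.biUnion sA ∪ B.biUnion sB).erase p₀ := by
          intro p hp
          rcases Finset.mem_union.1 hp with h | h
          · refine Finset.mem_erase.2 ⟨?_, Finset.mem_union_left _ h⟩
            rintro rfl; exact hp₀A h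
          · rw [biUnion_erase_eq] at h
            exact Finset.mem_erase.2 ⟨(Finset.mem_erase.1 h).1,
              Finset.mem_union_right _ (Finset.mem_erase.1 h).2⟩
        have hsub2 : A.biUnion sA ∪ (B.filter (fun b => p₀ ∉ sB b)).biUnion sB
            ⊆ (A.biUnion sA ∪ B.biUnion sB).erase p₀ := by
          intro p hp
          rcases Finset.mem_union.1 hp with h | h
          · refine Finset.mem_erase.2 ⟨?_, Finset.mem_union_left _ h⟩
            rintro rfl; exact hp₀A h
          · obtain ⟨b, hb, hpb⟩ := Finset.mem_biUnion.1 h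
            obtain ⟨hbB, hnp⟩ := Finset.mem_filter.1 hb
            refine Finset.mem_erase.2 ⟨?_, Finset.mem_union_right _ (Finset.mem_biUnion.2 ⟨b, hbB, hpb⟩)⟩
            rintro rfl; exact hnp hpb
        have hcard' : ((A.biUnion sA ∪ B.biUnion sB).erase p₀).card ≤ n := by
          rw [Finset.card_erase_of_mem hp₀]; omega
        have hd1 : Disjoint (A.biUnion sA) (B.biUnion (fun b => (sB b).erase p₀)) := by
          refine Disjoint.mono_right ?_ hdisj
          rw [biUnion_erase_eq]; exact Finset.erase_subset _ _
        have hd2 : Disjoint (A.biUnion sA) ((B.filter (fun b => p₀ ∉ sB b)).biUnion sB) := by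
          refine Disjoint.mono_right ?_ hdisj
          intro p hp
          obtain ⟨b, hb, hpb⟩ := Finset.mem_biUnion.1 hp
          exact Finset.mem_biUnion.2 ⟨b, (Finset.mem_filter.1 hb).1, hpb⟩
        have IH1 := ih A B sA (fun b => (sB b).erase p₀) hd1
          (le_trans (Finset.card_le_card hsub1) hcard')
        have IH2 := ih A (B.filter (fun b => p₀ ∉ sB b)) sA sB hd2
          (le_trans (Finset.card_le_card hsub2) hcard')
        rw [hrecP, hcongr, hfilter]
        nlinarith [IH1, IH2]

private lemma finset_lcm_facts {ι : Type*} [DecidableEq ι] (C : Finset ι) (f : ι → ℕ)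
    (hf : ∀ x ∈ C, f x ≠ 0) :
    C.lcm f ≠ 0 ∧ ∀ p, (C.lcm f).factorization p = C.sup fun x => (f x).factorization p := by
  classical
  induction C using Finset.induction_on with
  | empty => simp
  | @insert j s hj ih =>
    obtain ⟨h0, hfact⟩ := ih fun x hx => hf x (Finset.mem_insert_of_mem hx)
    have hj0 : f j ≠ 0 := hf j (Finset.mem_insert_self j s)
    rw [Finset.lcm_insert, lcm_eq_nat_lcm]
    refine ⟨Nat.lcm_ne_zero hj0 h0, fun p => ?_⟩
    rw [Nat.factorization_lcm hj0 h0, Finsupp.sup_apply, Finset.sup_insert, hfact p]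

private lemma finset_lcm_primeFactors {ι : Type*} [DecidableEq ι] (C : Finset ι) (f : ι → ℕ)
    (hf : ∀ x ∈ C, f x ≠ 0) :
    (C.lcm f).primeFactors = C.biUnion fun x => (f x).primeFactors := by
  classical
  obtain ⟨h0, hfact⟩ := finset_lcm_facts C f hf
  ext p
  rw [← Nat.support_factorization, Finsupp.mem_support_iff, hfact p]
  simp only [Finset.mem_biUnion, ← Nat.support_factorization, Finsupp.mem_support_iff]
  constructor
  · intro h
    by_contra hc
    push_neg at hc
    have : (C.sup fun x => (f x).factorization p) ≤ 0 :=
      Finset.sup_le fun x hx => le_of_eq (hc x hx)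
    exact h (Nat.le_zero.1 this)
  · rintro ⟨x, hx, hne⟩ hz
    exact hne (Nat.le_zero.1 (hz ▸ Finset.le_sup (f := fun x => (f x).factorization p) hx))

private lemma prime_not_both {p a b : ℕ} (hp : p.Prime) (hco : Nat.Coprime a b)
    (hpa : p ∣ a) (hpb : p ∣ b) : False := by
  have h1 : p ∣ Nat.gcd a b := Nat.dvd_gcd hpa hpb
  rw [Nat.Coprime] at hco
  rw [hco] at h1
  exact hp.ne_one (Nat.dvd_one.1 h1)

private lemma nat_cast_eq_prod_primeFactors {m : ℕ} (hm : m ≠ 0) :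
    (m : ℝ) = ∏ p ∈ m.primeFactors, (p : ℝ) ^ (m.factorization p) := by
  conv_lhs => rw [← Nat.factorization_prod_pow_eq_self hm]
  rw [Finsupp.prod]
  push_cast
  rw [Nat.support_factorization]

theorem stmt_16 (q : ℕ) (hq : 0 < q) (A B : Finset ℕ)
    (hA0 : ∀ a ∈ A, 0 < a) (hB0 : ∀ b ∈ B, 0 < b)
    (hAB : ∀ a ∈ A, ∀ b ∈ B, Nat.Coprime a b)
    (hAA : ∀ a1 ∈ A, ∀ a2 ∈ A, Nat.Coprime a1 (a2 / Nat.gcd a1 a2))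
    (hBB : ∀ b1 ∈ B, ∀ b2 ∈ B, Nat.Coprime b1 (b2 / Nat.gcd b1 b2))
    (d : ℕ → ℕ → ℝ)
    (hd : ∀ a b : ℕ, 0 < a → 0 < b →
      d a b = if Nat.Coprime a b ∧ Nat.Coprime (a * b) q then
          (1 / ((a : ℝ) * b)) *
            ((∏ p ∈ q.primeFactors, (1 - 2 / ((p : ℝ) + 1))) *
              ∏ p ∈ (a * b).primeFactors, (1 - 1 / ((p : ℝ) + 1)))
        else 0)
    (ν : ℝ)
    (hν : ν = ∑ C ∈ (A ×ˢ B).powerset.erase ∅,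
      (-1 : ℝ) ^ (C.card + 1) * d (C.lcm Prod.fst) (C.lcm Prod.snd)) :
    1 - ν ≥ (∏ p ∈ q.primeFactors, (1 - 2 / ((p : ℝ) + 1))) *
      ∏ c ∈ A ∪ B, (1 - (1 / (c : ℝ)) * ∏ p ∈ c.primeFactors, (1 - 1 / ((p : ℝ) + 1))) := by
  classical
  have hA0' : ∀ a ∈ A, a ≠ 0 := fun a ha => (hA0 a ha).ne'
  have hB0' : ∀ b ∈ B, b ≠ 0 := fun b hb => (hB0 b hb).ne'
  set Pq : ℝ := ∏ p ∈ q.primeFactors, (1 - 2 / ((p : ℝ) + 1)) with hPqdef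
  have hlcmA : A.lcm id ≠ 0 := (finset_lcm_facts A id hA0').1
  have hlcmB : B.lcm id ≠ 0 := (finset_lcm_facts B id hB0').1
  set L : ℕ := A.lcm id * B.lcm id with hLdef
  have hL0 : L ≠ 0 := mul_ne_zero hlcmA hlcmB
  set g : ℕ → ℝ := fun p =>
    if p ∣ q then 0 else (1 - 1 / ((p : ℝ) + 1)) / (p : ℝ) ^ (L.factorization p) with hgdef
  -- bounds on g
  have hg01 : ∀ p : ℕ, 0 ≤ g p ∧ g p ≤ 1 := by
    intro p
    by_cases hpq : p ∣ q
    · simp [hgdef, hpq]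
    · rcases Nat.eq_zero_or_pos p with rfl | hppos
      · simp [hgdef, hpq]
      · have hp1 : (1:ℝ) ≤ (p:ℝ) := by exact_mod_cast hppos
        have hposp1 : (0:ℝ) < (p:ℝ) + 1 := by linarith
        have hnum0 : (0:ℝ) ≤ 1 - 1 / ((p:ℝ) + 1) := by
          rw [sub_nonneg, div_le_one hposp1]; linarith
        have hnum1 : 1 - 1 / ((p:ℝ) + 1) ≤ 1 := by
          have : (0:ℝ) ≤ 1 / ((p:ℝ) + 1) := by positivity
          linarith
        have hden1 : (1:ℝ) ≤ (p:ℝ) ^ (L.factorization p) := one_le_pow₀ hp1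
        constructor
        · simp only [hgdef, if_neg hpq]
          exact div_nonneg hnum0 (by linarith)
        · simp only [hgdef, if_neg hpq]
          rw [div_le_one (by linarith)]
          linarith
  -- equal valuations within A
  have valEq : ∀ a1 ∈ A, ∀ a2 ∈ A, ∀ p : ℕ, p.Prime → p ∣ a1 →
      a2.factorization p ≤ a1.factorization p := by
    intro a1 h1 a2 h2 p hp hdvd
    by_cases hpa2 : p ∣ a2
    · by_contra hlt
      push_neg at hlt
      have hgcd := Nat.gcd_dvd_right a1 a2
      have hv : (a2 / Nat.gcd a1 a2).factorization p
          = a2.factorization p - min (a1.factorization p) (a2.factorization p) := by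
        rw [Nat.factorization_div hgcd, Finsupp.tsub_apply,
          Nat.factorization_gcd (hA0' a1 h1) (hA0' a2 h2), Finsupp.inf_apply]
      have hvpos : (a2 / Nat.gcd a1 a2).factorization p ≠ 0 := by
        rw [hv]; omega
      have hpd2 : p ∣ a2 / Nat.gcd a1 a2 := Nat.dvd_of_factorization_pos hvpos
      exact prime_not_both hp (hAA a1 h1 a2 h2) hdvd hpd2
    · rw [Nat.factorization_eq_zero_of_not_dvd hpa2]
      exact Nat.zero_le _
  have valEqB : ∀ b1 ∈ B, ∀ b2 ∈ B, ∀ p : ℕ, p.Prime → p ∣ b1 →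
      b2.factorization p ≤ b1.factorization p := by
    intro b1 h1 b2 h2 p hp hdvd
    by_cases hpb2 : p ∣ b2
    · by_contra hlt
      push_neg at hlt
      have hgcd := Nat.gcd_dvd_right b1 b2
      have hv : (b2 / Nat.gcd b1 b2).factorization p
          = b2.factorization p - min (b1.factorization p) (b2.factorization p) := by
        rw [Nat.factorization_div hgcd, Finsupp.tsub_apply,
          Nat.factorization_gcd (hB0' b1 h1) (hB0' b2 h2), Finsupp.inf_apply]
      have hvpos : (b2 / Nat.gcd b1 b2).factorization p ≠ 0 := by
        rw [hv]; omega
      have hpd2 : p ∣ b2 / Nat.gcd b1 b2 := Nat.dvd_of_factorization_pos hvpos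
      exact prime_not_both hp (hBB b1 h1 b2 h2) hdvd hpd2
    · rw [Nat.factorization_eq_zero_of_not_dvd hpb2]
      exact Nat.zero_le _
  -- L-valuation facts
  have hLfact : ∀ p, L.factorization p
      = (A.lcm id).factorization p + (B.lcm id).factorization p := by
    intro p
    rw [hLdef, Nat.factorization_mul hlcmA hlcmB, Finsupp.add_apply]
  have he_a : ∀ p : ℕ, p.Prime → ∀ a ∈ A, p ∣ a → L.factorization p = a.factorization p := by
    intro p hp a ha hdvd
    have h1 : (A.lcm id).factorization p = a.factorization p := by
      rw [(finset_lcm_facts A id hA0').2 p]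
      refine le_antisymm (Finset.sup_le fun x hx => valEq a ha x hx p hp hdvd) ?_
      exact Finset.le_sup (f := fun x => (id x : ℕ).factorization p) ha
    have h2 : (B.lcm id).factorization p = 0 := by
      rw [(finset_lcm_facts B id hB0').2 p]
      refine Nat.le_zero.1 (Finset.sup_le fun b hb => le_of_eq ?_)
      refine Nat.factorization_eq_zero_of_not_dvd fun hpb => ?_
      exact prime_not_both hp (hAB a ha b hb) hdvd hpb
    rw [hLfact p, h1, h2, add_zero]
  have he_b : ∀ p : ℕ, p.Prime → ∀ b ∈ B, p ∣ b → L.factorization p = b.factorization p := by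
    intro p hp b hb hdvd
    have h1 : (B.lcm id).factorization p = b.factorization p := by
      rw [(finset_lcm_facts B id hB0').2 p]
      refine le_antisymm (Finset.sup_le fun x hx => valEqB b hb x hx p hp hdvd) ?_
      exact Finset.le_sup (f := fun x => (id x : ℕ).factorization p) hb
    have h2 : (A.lcm id).factorization p = 0 := by
      rw [(finset_lcm_facts A id hA0').2 p]
      refine Nat.le_zero.1 (Finset.sup_le fun a ha => le_of_eq ?_)
      refine Nat.factorization_eq_zero_of_not_dvd fun hpa => ?_
      exact prime_not_both hp (hAB a ha b hb) hpa hdvd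
    rw [hLfact p, h1, h2, zero_add]
  -- the key evaluation of d on subsets of A ×ˢ B
  have ntC : ∀ C ∈ (A ×ˢ B).powerset,
      d (C.lcm Prod.fst) (C.lcm Prod.snd)
        = Pq * ∏ p ∈ C.biUnion (fun x => x.1.primeFactors ∪ x.2.primeFactors), g p := by
    intro C hC
    have hCsub := Finset.mem_powerset.1 hC
    have hmemA : ∀ x ∈ C, x.1 ∈ A := fun x hx => (Finset.mem_product.1 (hCsub hx)).1
    have hmemB : ∀ x ∈ C, x.2 ∈ B := fun x hx => (Finset.mem_product.1 (hCsub hx)).2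
    have hfst : ∀ x ∈ C, Prod.fst x ≠ 0 := fun x hx => hA0' x.1 (hmemA x hx)
    have hsnd : ∀ x ∈ C, Prod.snd x ≠ 0 := fun x hx => hB0' x.2 (hmemB x hx)
    obtain ⟨hm0, hmfact⟩ := finset_lcm_facts C Prod.fst hfst
    obtain ⟨hn0, hnfact⟩ := finset_lcm_facts C Prod.snd hsnd
    have hpfm : (C.lcm Prod.fst).primeFactors = C.biUnion (fun x => x.1.primeFactors) :=
      finset_lcm_primeFactors C Prod.fst hfst
    have hpfn : (C.lcm Prod.snd).primeFactors = C.biUnion (fun x => x.2.primeFactors) :=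
      finset_lcm_primeFactors C Prod.snd hsnd
    have hbsplit : C.biUnion (fun x => x.1.primeFactors ∪ x.2.primeFactors)
        = (C.lcm Prod.fst).primeFactors ∪ (C.lcm Prod.snd).primeFactors := by
      rw [hpfm, hpfn]
      ext p
      simp only [Finset.mem_biUnion, Finset.mem_union]
      constructor
      · rintro ⟨x, hx, h | h⟩
        · exact Or.inl ⟨x, hx, h⟩
        · exact Or.inr ⟨x, hx, h⟩
      · rintro (⟨x, hx, h⟩ | ⟨x, hx, h⟩)
        · exact ⟨x, hx, Or.inl h⟩
        · exact ⟨x, hx, Or.inr h⟩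
    have hmA : ∀ p ∈ (C.lcm Prod.fst).primeFactors, ∃ a ∈ A, p.Prime ∧ p ∣ a := by
      intro p hp
      rw [hpfm] at hp
      obtain ⟨x, hx, hpx⟩ := Finset.mem_biUnion.1 hp
      obtain ⟨hprime, hdvd, _⟩ := Nat.mem_primeFactors.1 hpx
      exact ⟨x.1, hmemA x hx, hprime, hdvd⟩
    have hnB : ∀ p ∈ (C.lcm Prod.snd).primeFactors, ∃ b ∈ B, p.Prime ∧ p ∣ b := by
      intro p hp
      rw [hpfn] at hp
      obtain ⟨x, hx, hpx⟩ := Finset.mem_biUnion.1 hp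
      obtain ⟨hprime, hdvd, _⟩ := Nat.mem_primeFactors.1 hpx
      exact ⟨x.2, hmemB x hx, hprime, hdvd⟩
    have hdisjmn : Disjoint (C.lcm Prod.fst).primeFactors (C.lcm Prod.snd).primeFactors := by
      rw [Finset.disjoint_left]
      intro p hpm hpn
      obtain ⟨a, haA, hp, hpa⟩ := hmA p hpm
      obtain ⟨b, hbB, _, hpb⟩ := hnB p hpn
      exact prime_not_both hp (hAB a haA b hbB) hpa hpb
    have hmn : Nat.Coprime (C.lcm Prod.fst) (C.lcm Prod.snd) :=
      (Nat.disjoint_primeFactors hm0 hn0).1 hdisjmn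
    have hvm : ∀ p ∈ (C.lcm Prod.fst).primeFactors,
        (C.lcm Prod.fst).factorization p = L.factorization p := by
      intro p hp
      rw [hpfm] at hp
      obtain ⟨x, hxC, hpx⟩ := Finset.mem_biUnion.1 hp
      obtain ⟨hprime, hpa, _⟩ := Nat.mem_primeFactors.1 hpx
      have h1 : (C.lcm Prod.fst).factorization p = x.1.factorization p := by
        rw [hmfact]
        refine le_antisymm (Finset.sup_le fun y hy =>
          valEq x.1 (hmemA x hxC) y.1 (hmemA y hy) p hprime hpa) ?_
        exact Finset.le_sup (f := fun y => (Prod.fst y).factorization p) hxC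
      rw [h1, he_a p hprime x.1 (hmemA x hxC) hpa]
    have hvn : ∀ p ∈ (C.lcm Prod.snd).primeFactors,
        (C.lcm Prod.snd).factorization p = L.factorization p := by
      intro p hp
      rw [hpfn] at hp
      obtain ⟨x, hxC, hpx⟩ := Finset.mem_biUnion.1 hp
      obtain ⟨hprime, hpb, _⟩ := Nat.mem_primeFactors.1 hpx
      have h1 : (C.lcm Prod.snd).factorization p = x.2.factorization p := by
        rw [hnfact]
        refine le_antisymm (Finset.sup_le fun y hy =>
          valEqB x.2 (hmemB x hxC) y.2 (hmemB y hy) p hprime hpb) ?_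
        exact Finset.le_sup (f := fun y => (Prod.snd y).factorization p) hxC
      rw [h1, he_b p hprime x.2 (hmemB x hxC) hpb]
    have hcastm : ((C.lcm Prod.fst : ℕ) : ℝ)
        = ∏ p ∈ (C.lcm Prod.fst).primeFactors, (p:ℝ) ^ (L.factorization p) := by
      rw [nat_cast_eq_prod_primeFactors hm0]
      exact Finset.prod_congr rfl fun p hp => by rw [hvm p hp]
    have hcastn : ((C.lcm Prod.snd : ℕ) : ℝ)
        = ∏ p ∈ (C.lcm Prod.snd).primeFactors, (p:ℝ) ^ (L.factorization p) := by
      rw [nat_cast_eq_prod_primeFactors hn0]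
      exact Finset.prod_congr rfl fun p hp => by rw [hvn p hp]
    rw [hd _ _ (Nat.pos_of_ne_zero hm0) (Nat.pos_of_ne_zero hn0)]
    by_cases hcop : Nat.Coprime (C.lcm Prod.fst * C.lcm Prod.snd) q
    · rw [if_pos ⟨hmn, hcop⟩]
      have hpfmn : (C.lcm Prod.fst * C.lcm Prod.snd).primeFactors
          = (C.lcm Prod.fst).primeFactors ∪ (C.lcm Prod.snd).primeFactors :=
        Nat.primeFactors_mul hm0 hn0
      have hnq : ∀ p ∈ (C.lcm Prod.fst).primeFactors ∪ (C.lcm Prod.snd).primeFactors,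
          ¬ p ∣ q := by
        intro p hp hpq
        rw [← hpfmn] at hp
        exact prime_not_both (Nat.prime_of_mem_primeFactors hp) hcop
          (Nat.dvd_of_mem_primeFactors hp) hpq
      have hgval : ∀ p ∈ (C.lcm Prod.fst).primeFactors ∪ (C.lcm Prod.snd).primeFactors,
          g p = (1 - 1 / ((p:ℝ) + 1)) / (p:ℝ) ^ (L.factorization p) := by
        intro p hp
        simp only [hgdef]
        exact if_neg (hnq p hp)
      rw [hbsplit, hpfmn, Finset.prod_congr rfl hgval, Finset.prod_div_distrib]
      have hden : ∏ p ∈ (C.lcm Prod.fst).primeFactors ∪ (C.lcm Prod.snd).primeFactors,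
          (p:ℝ) ^ (L.factorization p) = ((C.lcm Prod.fst : ℕ) : ℝ) * ((C.lcm Prod.snd : ℕ) : ℝ) := by
        rw [Finset.prod_union hdisjmn, ← hcastm, ← hcastn]
      rw [hden]
      have hmr : ((C.lcm Prod.fst : ℕ) : ℝ) ≠ 0 := Nat.cast_ne_zero.2 hm0
      have hnr : ((C.lcm Prod.snd : ℕ) : ℝ) ≠ 0 := Nat.cast_ne_zero.2 hn0
      ring
    · rw [if_neg (by rintro ⟨h1, h2⟩; exact hcop h2)]
      obtain ⟨p, hprime, hpmn, hpq⟩ := Nat.Prime.not_coprime_iff_dvd.1 hcop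
      have hpmem : p ∈ C.biUnion (fun x => x.1.primeFactors ∪ x.2.primeFactors) := by
        rw [hbsplit, ← Nat.primeFactors_mul hm0 hn0]
        exact Nat.mem_primeFactors.2 ⟨hprime, hpmn, mul_ne_zero hm0 hn0⟩
      rw [Finset.prod_eq_zero hpmem (by simp only [hgdef]; exact if_pos hpq), mul_zero]
  -- express ν via Xi
  have hXiNu : ν = Pq - Pq * Xi (A ×ˢ B) (fun x => x.1.primeFactors ∪ x.2.primeFactors) g := by
    rw [hν]
    have hsum : ∀ C ∈ (A ×ˢ B).powerset.erase ∅,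
        (-1:ℝ) ^ (C.card + 1) * d (C.lcm Prod.fst) (C.lcm Prod.snd)
        = -Pq * ((-1:ℝ) ^ C.card
            * ∏ p ∈ C.biUnion (fun x => x.1.primeFactors ∪ x.2.primeFactors), g p) := by
      intro C hC
      rw [ntC C (Finset.mem_of_mem_erase hC)]
      ring
    rw [Finset.sum_congr rfl hsum, ← Finset.mul_sum]
    have hXi := Finset.sum_erase_add ((A ×ˢ B).powerset)
      (fun C => (-1:ℝ) ^ C.card
        * ∏ p ∈ C.biUnion (fun x => x.1.primeFactors ∪ x.2.primeFactors), g p)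
      (Finset.empty_mem_powerset _)
    have heq : ∑ C ∈ (A ×ˢ B).powerset.erase ∅, ((-1:ℝ) ^ C.card
          * ∏ p ∈ C.biUnion (fun x => x.1.primeFactors ∪ x.2.primeFactors), g p)
        = Xi (A ×ˢ B) (fun x => x.1.primeFactors ∪ x.2.primeFactors) g - 1 := by
      simp only [Xi]
      simp only [Finset.card_empty, pow_zero, Finset.biUnion_empty, Finset.prod_empty,
        mul_one, one_mul] at hXi
      linarith [hXi]
    rw [heq]
    ring
  have hPq0 : 0 ≤ Pq := by
    rw [hPqdef]
    refine Finset.prod_nonneg fun p hp => ?_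
    have hp2 : (2:ℝ) ≤ (p:ℝ) := by exact_mod_cast (Nat.prime_of_mem_primeFactors hp).two_le
    rw [sub_nonneg, div_le_one (by linarith)]
    linarith
  have hPq1 : Pq ≤ 1 := by
    rw [hPqdef]
    refine Finset.prod_le_one (fun p hp => ?_) (fun p hp => ?_)
    · have hp2 : (2:ℝ) ≤ (p:ℝ) := by exact_mod_cast (Nat.prime_of_mem_primeFactors hp).two_le
      rw [sub_nonneg, div_le_one (by linarith)]
      linarith
    · have hp0 : (0:ℝ) ≤ (p:ℝ) := Nat.cast_nonneg p
      have : (0:ℝ) ≤ 2 / ((p:ℝ) + 1) := by positivity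
      linarith
  have hdisjAB : Disjoint (A.biUnion Nat.primeFactors) (B.biUnion Nat.primeFactors) := by
    rw [Finset.disjoint_left]
    intro p hpA hpB
    obtain ⟨a, ha, hpa⟩ := Finset.mem_biUnion.1 hpA
    obtain ⟨b, hb, hpb⟩ := Finset.mem_biUnion.1 hpB
    exact prime_not_both (Nat.prime_of_mem_primeFactors hpa) (hAB a ha b hb)
      (Nat.dvd_of_mem_primeFactors hpa) (Nat.dvd_of_mem_primeFactors hpb)
  have hpair := Xi_pair_ge g hg01 ((A.biUnion Nat.primeFactors ∪ B.biUnion Nat.primeFactors).card)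
    A B Nat.primeFactors Nat.primeFactors hdisjAB le_rfl
  have hboundsA := Xi_bounds g hg01 ((A.biUnion Nat.primeFactors).card) A Nat.primeFactors le_rfl
  have hpi_le : ∀ a ∈ A, ∏ p ∈ a.primeFactors, g p
      ≤ 1 / (a:ℝ) * ∏ p ∈ a.primeFactors, (1 - 1 / ((p:ℝ) + 1)) := by
    intro a ha
    have ha0 := hA0' a ha
    have h1 : ∏ p ∈ a.primeFactors, g p
        ≤ ∏ p ∈ a.primeFactors, ((1 - 1 / ((p:ℝ) + 1)) / (p:ℝ) ^ (L.factorization p)) := by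
      refine Finset.prod_le_prod (fun p _ => (hg01 p).1) (fun p hp => ?_)
      have hp2 : (2:ℝ) ≤ (p:ℝ) := by exact_mod_cast (Nat.prime_of_mem_primeFactors hp).two_le
      have hnum0 : (0:ℝ) ≤ 1 - 1 / ((p:ℝ) + 1) := by
        rw [sub_nonneg, div_le_one (by linarith)]
        linarith
      have hden0 : (0:ℝ) ≤ (p:ℝ) ^ (L.factorization p) := by positivity
      simp only [hgdef]
      split
      · exact div_nonneg hnum0 hden0
      · exact le_rfl
    refine h1.trans (le_of_eq ?_)
    rw [Finset.prod_div_distrib]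
    have hden : ∏ p ∈ a.primeFactors, (p:ℝ) ^ (L.factorization p) = (a:ℝ) := by
      rw [nat_cast_eq_prod_primeFactors ha0]
      refine Finset.prod_congr rfl fun p hp => ?_
      rw [he_a p (Nat.prime_of_mem_primeFactors hp) a ha (Nat.dvd_of_mem_primeFactors hp)]
    rw [hden]
    ring
  have hF0 : ∀ c : ℕ, c ≠ 0 →
      0 ≤ 1 / (c:ℝ) * ∏ p ∈ c.primeFactors, (1 - 1 / ((p:ℝ) + 1))
      ∧ 1 / (c:ℝ) * ∏ p ∈ c.primeFactors, (1 - 1 / ((p:ℝ) + 1)) ≤ 1 := by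
    intro c hc
    have hc1 : (1:ℝ) ≤ (c:ℝ) := by exact_mod_cast Nat.one_le_iff_ne_zero.2 hc
    have hfac : ∀ p ∈ c.primeFactors, (0:ℝ) ≤ 1 - 1 / ((p:ℝ) + 1) := by
      intro p hp
      have hp2 : (2:ℝ) ≤ (p:ℝ) := by exact_mod_cast (Nat.prime_of_mem_primeFactors hp).two_le
      rw [sub_nonneg, div_le_one (by linarith)]
      linarith
    have hnum0 : (0:ℝ) ≤ ∏ p ∈ c.primeFactors, (1 - 1 / ((p:ℝ) + 1)) :=
      Finset.prod_nonneg hfac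
    have hnum1 : ∏ p ∈ c.primeFactors, (1 - 1 / ((p:ℝ) + 1)) ≤ 1 := by
      refine Finset.prod_le_one hfac fun p hp => ?_
      have hp0 : (0:ℝ) ≤ (p:ℝ) := Nat.cast_nonneg p
      have : (0:ℝ) ≤ 1 / ((p:ℝ) + 1) := by positivity
      linarith
    have hc0 : (0:ℝ) < (c:ℝ) := by linarith
    constructor
    · exact mul_nonneg (by positivity) hnum0
    · calc 1 / (c:ℝ) * ∏ p ∈ c.primeFactors, (1 - 1 / ((p:ℝ) + 1))
          ≤ 1 / (c:ℝ) * 1 := mul_le_mul_of_nonneg_left hnum1 (by positivity)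
        _ ≤ 1 := by
            rw [mul_one, div_le_one hc0]
            linarith
  have hchain1 : ∏ c ∈ A ∪ B, (1 - 1 / (c:ℝ) * ∏ p ∈ c.primeFactors, (1 - 1 / ((p:ℝ) + 1)))
      ≤ ∏ a ∈ A, (1 - 1 / (a:ℝ) * ∏ p ∈ a.primeFactors, (1 - 1 / ((p:ℝ) + 1))) := by
    rw [← Finset.union_sdiff_self_eq_union, Finset.prod_union Finset.disjoint_sdiff]
    have h1 : ∏ c ∈ B \ A, (1 - 1 / (c:ℝ) * ∏ p ∈ c.primeFactors, (1 - 1 / ((p:ℝ) + 1))) ≤ 1 := by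
      refine Finset.prod_le_one (fun c hc => ?_) (fun c hc => ?_)
      · linarith [(hF0 c (hB0' c (Finset.mem_sdiff.1 hc).1)).2]
      · linarith [(hF0 c (hB0' c (Finset.mem_sdiff.1 hc).1)).1]
    have h2 : (0:ℝ) ≤ ∏ a ∈ A, (1 - 1 / (a:ℝ) * ∏ p ∈ a.primeFactors, (1 - 1 / ((p:ℝ) + 1))) :=
      Finset.prod_nonneg fun a ha => by linarith [(hF0 a (hA0' a ha)).2]
    exact mul_le_of_le_one_right h2 h1
  have hchain2 : ∏ a ∈ A, (1 - 1 / (a:ℝ) * ∏ p ∈ a.primeFactors, (1 - 1 / ((p:ℝ) + 1)))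
      ≤ ∏ a ∈ A, (1 - ∏ p ∈ a.primeFactors, g p) := by
    refine Finset.prod_le_prod (fun a ha => by linarith [(hF0 a (hA0' a ha)).2])
      (fun a ha => by linarith [hpi_le a ha])
  have hTX : ∏ c ∈ A ∪ B, (1 - 1 / (c:ℝ) * ∏ p ∈ c.primeFactors, (1 - 1 / ((p:ℝ) + 1)))
      ≤ Xi (A ×ˢ B) (fun x => x.1.primeFactors ∪ x.2.primeFactors) g :=
    le_trans (le_trans (le_trans hchain1 hchain2) hboundsA.1) hpair
  rw [ge_iff_le, hXiNu]
  have hmul := mul_le_mul_of_nonneg_left hTX hPq0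
  linarith [hmul, hPq1]
end
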